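/- arXiv:1209.2131 — 4 statements merged into one kernel-verified Lean document; each statement's English description precedes it below -/
import Mathlib

section
/- In the star network setting, for every θ ≥ 0 there exists exactly one pair (p̃, λ) with p̃ ∈ ℝ^{1+n_1+⋯+n_J} and λ ∈ ℝ^J satisfying the KKT conditions at θ, and its first component p̃ equals the Euclidean projection p̃_θ of the Vikrey vector v_θ onto the expanded core K. -/
/-- The star network setting of Abhishek–Hajek. -/
structure StarSetting where
  /-- number of arms -/
  J : ℕ
  hJ : 0 < J
  /-- number of leaf items on arm `j` -/
  n : Fin J → ℕ
  hn : ∀ j, 0 < n j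
  /-- winning single-item bids -/
  b : (j : Fin J) → Fin (n j) → ℝ
  /-- losing single-item bids -/
  bl : (j : Fin J) → Fin (n j) → ℝ
  /-- losing single-item bid for item zero -/
  bl0 : ℝ
  /-- package bids -/
  C : Fin J → ℝ
  h_bid : ∀ j k, bl j k ≤ b j k
  h_pos : ∀ j, ∃ k, bl j k < b j k

namespace StarSetting

/-- Index of items (= winning buyers): `none` is item zero, `some ⟨j,k⟩` is item `(j,k)`. -/
abbrev Idx (S : StarSetting) := Option ((j : Fin S.J) × Fin (S.n j))

variable (S : StarSetting)

noncomputable def Δ (j : Fin S.J) (k : Fin (S.n j)) : ℝ := S.b j k - S.bl j k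

noncomputable def Δmax (j : Fin S.J) : ℝ :=
  Finset.univ.sup' ⟨⟨0, S.hn j⟩, Finset.mem_univ _⟩ (S.Δ j)

noncomputable def v0 : ℝ :=
  max S.bl0 (Finset.univ.sup' ⟨⟨0, S.hJ⟩, Finset.mem_univ _⟩
    fun j => S.C j - ∑ k, S.b j k)

noncomputable def η (j : Fin S.J) : ℝ := S.v0 + (∑ k, S.b j k) - S.C j

/-- The Vikrey price vector `v_θ`. -/
noncomputable def vick (θ : ℝ) : EuclideanSpace ℝ S.Idx :=
  WithLp.toLp 2 fun (i : S.Idx) => Option.elim i S.v0 fun jk => max (S.b jk.1 jk.2 - S.η jk.1 - θ) (S.bl jk.1 jk.2)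

/-- The core region `K_θ`. -/
def coreK (θ : ℝ) : Set (EuclideanSpace ℝ S.Idx) :=
  { p | (∀ j, S.C j ≤ p none + ∑ k, p (some ⟨j, k⟩)) ∧
        (∀ j k, S.bl j k ≤ p (some ⟨j, k⟩) ∧ p (some ⟨j, k⟩) ≤ S.b j k) ∧
        S.v0 ≤ p none ∧ p none ≤ S.v0 + θ }

/-- The expanded core region (IR constraint of buyer zero dropped). -/
def expandedK : Set (EuclideanSpace ℝ S.Idx) :=
  { p | (∀ j, S.C j ≤ p none + ∑ k, p (some ⟨j, k⟩)) ∧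
        (∀ j k, S.bl j k ≤ p (some ⟨j, k⟩) ∧ p (some ⟨j, k⟩) ≤ S.b j k) ∧
        S.v0 ≤ p none }

/-- The KKT conditions at `θ` for the projection onto the expanded core. -/
def KKT (θ : ℝ) (p : EuclideanSpace ℝ S.Idx) (lam : Fin S.J → ℝ) : Prop :=
  (∀ j, 0 ≤ lam j) ∧
  p none = S.v0 + ∑ j, lam j ∧
  (∀ j k, p (some ⟨j, k⟩) = min (S.vick θ (some ⟨j, k⟩) + lam j) (S.b j k)) ∧
  (∀ j, ∑ k, max (min (S.η j + θ) (S.Δ j k) - lam j) 0 ≤ (∑ i, lam i) + S.η j) ∧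
  (∀ j, 0 < lam j → (∑ i, lam i) + S.η j = ∑ k, max (min (S.η j + θ) (S.Δ j k) - lam j) 0)

/-- The seller's revenue for a winner price vector. -/
noncomputable def revenue (p : EuclideanSpace ℝ S.Idx) : ℝ :=
  p none + ∑ j, ∑ k, p (some ⟨j, k⟩)

/-- The minimum revenue core at `θ`. -/
def MRC (θ : ℝ) : Set (EuclideanSpace ℝ S.Idx) :=
  { p | p ∈ S.coreK θ ∧ ∀ q ∈ S.coreK θ, S.revenue p ≤ S.revenue q }

end StarSetting

/-- `q` is a point of `A` nearest to `v` (Euclidean projection of `v` onto `A`). -/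
def IsProjOn {E : Type*} [NormedAddCommGroup E] (A : Set E) (v q : E) : Prop :=
  q ∈ A ∧ ∀ r ∈ A, dist v q ≤ dist v r

/-- `f` is piecewise linear on `[0, ∞)`: there are finitely many breakpoints
`0 = t 0 < t 1 < ⋯ < t m` such that `f` is affine on each `[t i, t (i+1)]` and on `[t m, ∞)`. -/
def PiecewiseLinearOnIci (f : ℝ → ℝ) : Prop :=
  ∃ m : ℕ, ∃ t : Fin (m + 1) → ℝ, t 0 = 0 ∧ StrictMono t ∧
    (∀ i : Fin m, ∃ a c : ℝ, ∀ x ∈ Set.Icc (t i.castSucc) (t i.succ), f x = a * x + c) ∧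
    (∃ a c : ℝ, ∀ x ∈ Set.Ici (t (Fin.last m)), f x = a * x + c)



open Finset

section Aux

variable (S : StarSetting) (θ : ℝ)

/-- abbreviation for `min (η j + θ) (Δ j k)`. -/
noncomputable def mmS (j : Fin S.J) (k : Fin (S.n j)) : ℝ := min (S.η j + θ) (S.Δ j k)

noncomputable def phiS (j : Fin S.J) (x : ℝ) : ℝ := ∑ k, max (mmS S θ j k - x) 0

lemma eta_nonneg (j : Fin S.J) : 0 ≤ S.η j := by
  have h1 : S.C j - ∑ k, S.b j k ≤ S.v0 := by
    refine le_trans (Finset.le_sup' (f := fun j => S.C j - ∑ k, S.b j k) (Finset.mem_univ j)) ?_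
    exact le_max_right _ _
  simp only [StarSetting.η]; linarith

lemma mm_nonneg (hθ : 0 ≤ θ) (j : Fin S.J) (k : Fin (S.n j)) : 0 ≤ mmS S θ j k := by
  refine le_min (by linarith [eta_nonneg S j]) ?_
  simp only [StarSetting.Δ, sub_nonneg]; exact S.h_bid j k

lemma vick_some (j : Fin S.J) (k : Fin (S.n j)) :
    S.vick θ (some ⟨j, k⟩) = S.b j k - mmS S θ j k := by
  show max (S.b j k - S.η j - θ) (S.bl j k) = S.b j k - min (S.η j + θ) (S.Δ j k)
  simp only [StarSetting.Δ]
  rcases le_total (S.η j + θ) (S.b j k - S.bl j k) with h | h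
  · rw [min_eq_left h, max_eq_left (by linarith)]; ring
  · rw [min_eq_right h, max_eq_right (by linarith)]; ring

lemma min_formula (j : Fin S.J) (k : Fin (S.n j)) (x : ℝ) :
    min (S.vick θ (some ⟨j, k⟩) + x) (S.b j k) = S.b j k - max (mmS S θ j k - x) 0 := by
  rw [vick_some]
  rcases le_total (mmS S θ j k - x) 0 with h | h
  · rw [max_eq_right h, min_eq_right (by linarith)]; ring
  · rw [max_eq_left h, min_eq_left (by linarith)]; ring

lemma row_sum {p : EuclideanSpace ℝ S.Idx} {lam : Fin S.J → ℝ}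
    (h2 : p none = S.v0 + ∑ j, lam j)
    (h3 : ∀ j k, p (some ⟨j, k⟩) = min (S.vick θ (some ⟨j, k⟩) + lam j) (S.b j k))
    (j : Fin S.J) :
    p none + ∑ k, p (some ⟨j, k⟩)
      = S.C j + S.η j + (∑ i, lam i) - phiS S θ j (lam j) := by
  have hsum : ∑ k, p (some ⟨j, k⟩) = (∑ k, S.b j k) - phiS S θ j (lam j) := by
    rw [phiS, ← Finset.sum_sub_distrib]
    exact Finset.sum_congr rfl fun k _ => by rw [h3 j k, min_formula]
  rw [h2, hsum]; simp only [StarSetting.η]; ring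

lemma hasDerivAt_sq_max (x : ℝ) :
    HasDerivAt (fun u : ℝ => max u 0 ^ 2 / 2) (max x 0) x := by
  rcases lt_trichotomy x 0 with h | h | h
  · rw [max_eq_right h.le]
    refine HasDerivAt.congr_of_eventuallyEq (hasDerivAt_const x 0) ?_
    filter_upwards [Iio_mem_nhds h] with u hu
    simp [max_eq_right (le_of_lt (Set.mem_Iio.1 hu))]
  · subst h
    rw [hasDerivAt_iff_isLittleO, Asymptotics.isLittleO_iff]
    intro ε hε
    filter_upwards [Metric.ball_mem_nhds (0:ℝ) hε] with u hu
    rw [Real.ball_eq_Ioo] at hu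
    have h1 : |max u 0| ≤ |u| := by
      rcases le_total u 0 with h | h
      · rw [max_eq_right h]; simp [abs_nonneg]
      · rw [max_eq_left h]
    have h2 : |u| < ε := abs_lt.2 (by constructor <;> [linarith [hu.1]; linarith [hu.2]])
    simp only [max_self, ne_eq, OfNat.ofNat_ne_zero, not_false_eq_true, zero_pow, zero_div,
      sub_zero, smul_zero, Real.norm_eq_abs]
    have h3 : max u 0 ^ 2 ≤ |u| * |u| := by
      calc max u 0 ^ 2 = |max u 0| * |max u 0| := by rw [← abs_mul, sq, abs_of_nonneg (mul_self_nonneg _)]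
      _ ≤ |u| * |u| := mul_le_mul h1 h1 (abs_nonneg _) (abs_nonneg _)
    rw [abs_of_nonneg (by positivity : (0:ℝ) ≤ max u 0 ^ 2 / 2)]
    nlinarith [abs_nonneg u]
  · rw [max_eq_left h.le]
    have hd : HasDerivAt (fun u : ℝ => u ^ 2 / 2) x x := by
      have := ((hasDerivAt_id x).pow 2).div_const 2
      simpa using this
    refine hd.congr_of_eventuallyEq ?_
    filter_upwards [Ioi_mem_nhds h] with u hu
    simp [max_eq_left (le_of_lt (Set.mem_Ioi.1 hu))]

lemma hasDerivAt_sq_max_comp (c t : ℝ) :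
    HasDerivAt (fun t : ℝ => max (c - t) 0 ^ 2 / 2) (-(max (c - t) 0)) t := by
  have h2 : HasDerivAt (fun t : ℝ => c - t) (-1) t := by
    simpa using (hasDerivAt_const t c).fun_sub (hasDerivAt_id' t)
  have := (hasDerivAt_sq_max (c - t)).comp t h2
  simpa [Function.comp_def] using this

/-- The potential function whose constrained minimizers give KKT multipliers. -/
noncomputable def PsiS (lam : Fin S.J → ℝ) : ℝ :=
  (∑ i, lam i) ^ 2 / 2 + ∑ j, (S.η j * lam j + ∑ k, max (mmS S θ j k - lam j) 0 ^ 2 / 2)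

lemma Psi_update (lam : Fin S.J → ℝ) (j : Fin S.J) (t : ℝ) :
    PsiS S θ (Function.update lam j t)
      = (t + ∑ i ∈ univ.erase j, lam i) ^ 2 / 2
        + (S.η j * t + ∑ k, max (mmS S θ j k - t) 0 ^ 2 / 2)
        + ∑ i ∈ univ.erase j, (S.η i * lam i + ∑ k, max (mmS S θ i k - lam i) 0 ^ 2 / 2) := by
  have e1 : ∑ i, Function.update lam j t i = t + ∑ i ∈ univ.erase j, lam i := by
    rw [Finset.sum_update_of_mem (mem_univ j), Finset.erase_eq]
  have e2 : ∑ i, (S.η i * Function.update lam j t i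
        + ∑ k, max (mmS S θ i k - Function.update lam j t i) 0 ^ 2 / 2)
      = (S.η j * t + ∑ k, max (mmS S θ j k - t) 0 ^ 2 / 2)
        + ∑ i ∈ univ.erase j, (S.η i * lam i + ∑ k, max (mmS S θ i k - lam i) 0 ^ 2 / 2) := by
    rw [← Finset.add_sum_erase _ _ (mem_univ j), Function.update_self]
    congr 1
    refine Finset.sum_congr rfl fun i hi => ?_
    rw [Function.update_of_ne (Finset.ne_of_mem_erase hi)]
  rw [PsiS, e1, e2]; ring

lemma hasDerivAt_Psi_update (lam : Fin S.J → ℝ) (j : Fin S.J) (t : ℝ) :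
    HasDerivAt (fun t => PsiS S θ (Function.update lam j t))
      ((t + ∑ i ∈ univ.erase j, lam i) + S.η j - phiS S θ j t) t := by
  have hfun : (fun t => PsiS S θ (Function.update lam j t))
      = fun t => (t + ∑ i ∈ univ.erase j, lam i) ^ 2 / 2
        + (S.η j * t + ∑ k, max (mmS S θ j k - t) 0 ^ 2 / 2)
        + ∑ i ∈ univ.erase j, (S.η i * lam i + ∑ k, max (mmS S θ i k - lam i) 0 ^ 2 / 2) :=
    funext fun t => Psi_update S θ lam j t
  rw [hfun]
  set c := ∑ i ∈ univ.erase j, lam i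
  have h1 : HasDerivAt (fun t : ℝ => (t + c) ^ 2 / 2) (t + c) t := by
    have := (((hasDerivAt_id t).add_const c).pow 2).div_const 2
    simpa using this
  have h2 : HasDerivAt (fun t : ℝ => S.η j * t) (S.η j) t := by
    simpa using (hasDerivAt_id t).const_mul (S.η j)
  have h3 : HasDerivAt (fun t : ℝ => ∑ k, max (mmS S θ j k - t) 0 ^ 2 / 2)
      (∑ k, -(max (mmS S θ j k - t) 0)) t :=
    HasDerivAt.fun_sum fun k _ => hasDerivAt_sq_max_comp (mmS S θ j k) t
  have := ((h1.fun_add (h2.fun_add h3)).add_const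
    (∑ i ∈ univ.erase j, (S.η i * lam i + ∑ k, max (mmS S θ i k - lam i) 0 ^ 2 / 2)))
  refine this.congr_deriv ?_
  rw [phiS, Finset.sum_neg_distrib]
  ring

lemma Psi_lower (lam : Fin S.J → ℝ) (hlam : ∀ i, 0 ≤ lam i) :
    (∑ i, lam i) ^ 2 / 2 ≤ PsiS S θ lam := by
  rw [PsiS]
  have : (0:ℝ) ≤ ∑ j, (S.η j * lam j + ∑ k, max (mmS S θ j k - lam j) 0 ^ 2 / 2) := by
    refine Finset.sum_nonneg fun j _ => add_nonneg (mul_nonneg (eta_nonneg S j) (hlam j))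
      (Finset.sum_nonneg fun k _ => by positivity)
  linarith

lemma exists_lam (hθ : 0 ≤ θ) :
    ∃ lam : Fin S.J → ℝ, (∀ j, 0 ≤ lam j) ∧
      (∀ j, phiS S θ j (lam j) ≤ (∑ i, lam i) + S.η j) ∧
      (∀ j, 0 < lam j → (∑ i, lam i) + S.η j = phiS S θ j (lam j)) := by
  classical
  set B := PsiS S θ 0 with hBdef
  have hB0 : 0 ≤ B := by
    have := Psi_lower S θ 0 (fun i => le_refl 0)
    simpa using this
  set R := B + 2 with hRdef
  have hR0 : (0:ℝ) ≤ R := by linarith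
  set Kbox : Set (Fin S.J → ℝ) := Set.Icc 0 (fun _ => R) with hKdef
  have h0mem : (0 : Fin S.J → ℝ) ∈ Kbox := Set.mem_Icc.2 ⟨le_refl _, fun i => hR0⟩
  have hne : Kbox.Nonempty := ⟨0, h0mem⟩
  have hcont : Continuous (PsiS S θ) := by
    refine Continuous.add (Continuous.div_const (Continuous.pow
      (continuous_finset_sum _ fun i _ => continuous_apply i) 2) 2)
      (continuous_finset_sum _ fun j _ => Continuous.add
        (continuous_const.mul (continuous_apply j))
        (continuous_finset_sum _ fun k _ => Continuous.div_const (Continuous.pow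
          (Continuous.max (continuous_const.sub (continuous_apply j)) continuous_const) 2) 2))
  obtain ⟨lam, hlamK, hmin⟩ := isCompact_Icc.exists_isMinOn hne hcont.continuousOn
  have hlam0 : ∀ i, 0 ≤ lam i := fun i => (Set.mem_Icc.1 hlamK).1 i
  have hminB : PsiS S θ lam ≤ B := hmin h0mem
  have hglobal : ∀ μ : Fin S.J → ℝ, (∀ i, 0 ≤ μ i) → PsiS S θ lam ≤ PsiS S θ μ := by
    intro μ hμ
    by_cases hc : ∀ i, μ i ≤ R
    · exact hmin (Set.mem_Icc.2 ⟨fun i => hμ i, fun i => hc i⟩)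
    · push_neg at hc
      obtain ⟨i, hi⟩ := hc
      have h1 : R ≤ ∑ i, μ i :=
        le_trans hi.le (Finset.single_le_sum (fun i _ => hμ i) (mem_univ i))
      have h2 := Psi_lower S θ μ hμ
      nlinarith
  have hcond : ∀ j, (0 ≤ (∑ i, lam i) + S.η j - phiS S θ j (lam j)) ∧
      (0 < lam j → (∑ i, lam i) + S.η j - phiS S θ j (lam j) = 0) := by
    intro j
    have hS : lam j + ∑ i ∈ univ.erase j, lam i = ∑ i, lam i :=
      Finset.add_sum_erase _ _ (mem_univ j)
    have hder := hasDerivAt_Psi_update S θ lam j (lam j)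
    have hupd : Function.update lam j (lam j) = lam := Function.update_eq_self j lam
    have hone : ∀ t, 0 ≤ t → PsiS S θ lam ≤ PsiS S θ (Function.update lam j t) := by
      intro t ht
      refine hglobal _ fun i => ?_
      rcases eq_or_ne i j with rfl | hij
      · rw [Function.update_self]; exact ht
      · rw [Function.update_of_ne hij]; exact hlam0 i
    rcases eq_or_lt_of_le (hlam0 j) with he | hpos
    · -- boundary case: right derivative nonneg
      constructor
      · have hslope := hasDerivAt_iff_tendsto_slope.1 hder
        have hmono : Set.Ioi (lam j) ⊆ {lam j}ᶜ := fun x hx => ne_of_gt hx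
        have htd := hslope.mono_left (nhdsWithin_mono _ hmono)
        have hge : 0 ≤ (lam j + ∑ i ∈ univ.erase j, lam i) + S.η j - phiS S θ j (lam j) := by
          refine ge_of_tendsto htd ?_
          filter_upwards [self_mem_nhdsWithin] with x hx
          rw [slope_def_field]
          have hx0 : 0 ≤ x := le_trans (hlam0 j) (le_of_lt hx)
          have h1 : PsiS S θ (Function.update lam j (lam j)) ≤ PsiS S θ (Function.update lam j x) := by
            rw [hupd]; exact hone x hx0
          exact div_nonneg (by linarith) (by linarith [Set.mem_Ioi.1 hx])
        rw [hS] at hge; exact hge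
      · intro hpos'; exact absurd he (by linarith)
    · -- interior case: derivative zero
      have hloc : IsLocalMin (fun t => PsiS S θ (Function.update lam j t)) (lam j) := by
        refine Filter.eventually_of_mem (Ioi_mem_nhds hpos) fun t ht => ?_
        show PsiS S θ (Function.update lam j (lam j)) ≤ PsiS S θ (Function.update lam j t)
        rw [hupd]; exact hone t (le_of_lt (Set.mem_Ioi.1 ht))
      have hz := hloc.hasDerivAt_eq_zero hder
      rw [hS] at hz
      exact ⟨le_of_eq hz.symm, fun _ => hz⟩
  exact ⟨lam, hlam0, fun j => by linarith [(hcond j).1],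
    fun j hj => by linarith [(hcond j).2 hj]⟩

lemma kkt_mem_vi {p : EuclideanSpace ℝ S.Idx} {lam : Fin S.J → ℝ}
    (h : S.KKT θ p lam) :
    p ∈ S.expandedK ∧ ∀ r ∈ S.expandedK, (inner ℝ (S.vick θ - p) (r - p) : ℝ) ≤ 0 := by
  obtain ⟨h1, h2, h3, h4, h5⟩ := h
  have h4' : ∀ j, phiS S θ j (lam j) ≤ (∑ i, lam i) + S.η j := h4
  have h5' : ∀ j, 0 < lam j → (∑ i, lam i) + S.η j = phiS S θ j (lam j) := h5
  have hrow := row_sum S θ h2 h3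
  have hvp : ∀ j k, S.vick θ (some ⟨j, k⟩) - p (some ⟨j, k⟩)
      = -(min (lam j) (mmS S θ j k)) := by
    intro j k
    rw [h3 j k, min_formula, vick_some]
    rcases le_total (lam j) (mmS S θ j k) with hc | hc
    · rw [min_eq_left hc, max_eq_left (by linarith)]; ring
    · rw [min_eq_right hc, max_eq_right (by linarith)]; ring
  have hmem : p ∈ S.expandedK := by
    refine ⟨fun j => ?_, fun j k => ?_, ?_⟩
    · rw [hrow j]; linarith [h4' j]
    · constructor
      · rw [h3 j k]
        refine le_min ?_ (S.h_bid j k)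
        have hb : S.bl j k ≤ S.vick θ (some ⟨j, k⟩) := le_max_right _ _
        linarith [h1 j]
      · rw [h3 j k]; exact min_le_right _ _
    · rw [h2]
      have : (0:ℝ) ≤ ∑ j, lam j := Finset.sum_nonneg fun j _ => h1 j
      linarith
  refine ⟨hmem, fun r hr => ?_⟩
  obtain ⟨hr1, hr2, hr3⟩ := hr
  have hnone : S.vick θ none - p none = -(∑ j, lam j) := by
    rw [h2]
    show S.v0 - (S.v0 + ∑ j, lam j) = -(∑ j, lam j)
    ring
  rw [real_inner_comm]
  rw [PiLp.inner_apply]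
  simp only [RCLike.inner_apply, conj_trivial, PiLp.sub_apply]
  rw [Fintype.sum_option, ← Finset.univ_sigma_univ, Finset.sum_sigma]
  have hsplit : (S.vick θ none - p none) * (r none - p none)
        + ∑ j, ∑ k, (S.vick θ (some ⟨j, k⟩) - p (some ⟨j, k⟩))
            * (r (some ⟨j, k⟩) - p (some ⟨j, k⟩))
      = ∑ j, (-(lam j) * (r none - p none)
          + ∑ k, (S.vick θ (some ⟨j, k⟩) - p (some ⟨j, k⟩))
              * (r (some ⟨j, k⟩) - p (some ⟨j, k⟩))) := by
    rw [Finset.sum_add_distrib, ← Finset.sum_mul, Finset.sum_neg_distrib, hnone]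
  rw [hsplit]
  refine Finset.sum_nonpos fun j _ => ?_
  set d0 := r none - p none with hd0
  set dk : Fin (S.n j) → ℝ := fun k => r (some ⟨j, k⟩) - p (some ⟨j, k⟩) with hdk
  have hid : -(lam j) * d0
        + ∑ k, (S.vick θ (some ⟨j, k⟩) - p (some ⟨j, k⟩)) * dk k
      = -(lam j) * (d0 + ∑ k, dk k)
        + ∑ k, (lam j - min (lam j) (mmS S θ j k)) * dk k := by
    have e : ∀ k ∈ (univ : Finset (Fin (S.n j))),
        (S.vick θ (some ⟨j, k⟩) - p (some ⟨j, k⟩)) * dk k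
          = -(lam j) * dk k + (lam j - min (lam j) (mmS S θ j k)) * dk k := fun k _ => by
      rw [hvp j k]; ring
    rw [Finset.sum_congr rfl e, Finset.sum_add_distrib, ← Finset.mul_sum]
    ring
  have hp1 : -(lam j) * (d0 + ∑ k, dk k) ≤ 0 := by
    rcases eq_or_lt_of_le (h1 j) with he | hpos
    · rw [← he]; simp
    · have hC : p none + ∑ k, p (some ⟨j, k⟩) = S.C j := by
        rw [hrow j, ← h5' j hpos]; ring
      have hsum : d0 + ∑ k, dk k
          = (r none + ∑ k, r (some ⟨j, k⟩)) - (p none + ∑ k, p (some ⟨j, k⟩)) := by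
        rw [hd0, hdk, Finset.sum_sub_distrib]; ring
      have hge : 0 ≤ d0 + ∑ k, dk k := by
        rw [hsum, hC]; linarith [hr1 j]
      nlinarith
  have hp2 : ∀ k ∈ (univ : Finset (Fin (S.n j))),
      (lam j - min (lam j) (mmS S θ j k)) * dk k ≤ 0 := by
    intro k _
    rcases le_total (lam j) (mmS S θ j k) with hc | hc
    · rw [min_eq_left hc]; simp
    · rw [min_eq_right hc]
      have hpk : p (some ⟨j, k⟩) = S.b j k := by
        rw [h3 j k, min_formula, max_eq_right (by linarith)]; ring
      have hdk0 : dk k ≤ 0 := by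
        rw [hdk]; simp only []; rw [hpk]; linarith [(hr2 j k).2]
      nlinarith
  calc -(lam j) * d0 + ∑ k, (S.vick θ (some ⟨j, k⟩) - p (some ⟨j, k⟩)) * dk k
      = -(lam j) * (d0 + ∑ k, dk k)
        + ∑ k, (lam j - min (lam j) (mmS S θ j k)) * dk k := hid
    _ ≤ 0 := by linarith [Finset.sum_nonpos hp2]

lemma kkt_isProjOn {p : EuclideanSpace ℝ S.Idx} {lam : Fin S.J → ℝ}
    (h : S.KKT θ p lam) : IsProjOn S.expandedK (S.vick θ) p := by
  obtain ⟨hmem, hvi⟩ := kkt_mem_vi S θ h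
  refine ⟨hmem, fun r hr => ?_⟩
  rw [dist_eq_norm, dist_eq_norm]
  have hexp : ‖S.vick θ - r‖ ^ 2 = ‖S.vick θ - p‖ ^ 2
      - 2 * (inner ℝ (S.vick θ - p) (r - p) : ℝ) + ‖r - p‖ ^ 2 := by
    rw [show S.vick θ - r = (S.vick θ - p) - (r - p) from
      (sub_sub_sub_cancel_right _ _ _).symm]
    exact norm_sub_sq_real _ _
  have h2 : ‖S.vick θ - p‖ ^ 2 ≤ ‖S.vick θ - r‖ ^ 2 := by
    have := hvi r hr
    nlinarith [sq_nonneg ‖r - p‖]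
  nlinarith [norm_nonneg (S.vick θ - p), norm_nonneg (S.vick θ - r)]

lemma kkt_p_unique {p p' : EuclideanSpace ℝ S.Idx} {lam lam' : Fin S.J → ℝ}
    (h : S.KKT θ p lam) (h' : S.KKT θ p' lam') : p = p' := by
  obtain ⟨hmem, hvi⟩ := kkt_mem_vi S θ h
  obtain ⟨hmem', hvi'⟩ := kkt_mem_vi S θ h'
  have e1 := hvi p' hmem'
  have e2 := hvi' p hmem
  have e3 : (inner ℝ (S.vick θ - p') (p - p') : ℝ) = -(inner ℝ (S.vick θ - p') (p' - p) : ℝ) := by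
    rw [show p - p' = -(p' - p) from (neg_sub _ _).symm, inner_neg_right]
  have e4 : (inner ℝ (p' - p) (p' - p) : ℝ)
      = (inner ℝ (S.vick θ - p) (p' - p) : ℝ) - (inner ℝ (S.vick θ - p') (p' - p) : ℝ) := by
    rw [← inner_sub_left, sub_sub_sub_cancel_left]
  have e5 : (‖p' - p‖:ℝ) ^ 2 ≤ 0 := by
    rw [← real_inner_self_eq_norm_sq]
    linarith [e1, e2, e3.symm ▸ e2, e4]
  have : ‖p' - p‖ = 0 := le_antisymm (by nlinarith [norm_nonneg (p' - p)]) (norm_nonneg _)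
  have := norm_eq_zero.1 this
  exact (sub_eq_zero.1 this).symm

lemma kkt_lam_not_lt {lam lam' : Fin S.J → ℝ}
    (h1 : ∀ j, 0 ≤ lam j) (h1' : ∀ j, 0 ≤ lam' j)
    (h4 : ∀ j, phiS S θ j (lam j) ≤ (∑ i, lam i) + S.η j)
    (h5' : ∀ j, 0 < lam' j → (∑ i, lam' i) + S.η j = phiS S θ j (lam' j))
    (hsum : ∑ i, lam i = ∑ i, lam' i) (j : Fin S.J) : ¬ lam j < lam' j := by
  intro hlt
  have hpos : 0 < lam' j := lt_of_le_of_lt (h1 j) hlt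
  have heq := h5' j hpos
  have termle : ∀ k ∈ (univ : Finset (Fin (S.n j))),
      max (mmS S θ j k - lam' j) 0 ≤ max (mmS S θ j k - lam j) 0 := fun k _ =>
    max_le_max (by linarith) le_rfl
  have hphile : phiS S θ j (lam' j) ≤ phiS S θ j (lam j) := Finset.sum_le_sum termle
  have hphieq : phiS S θ j (lam' j) = phiS S θ j (lam j) := by
    have := h4 j; rw [hsum] at this; linarith
  have hterm := (Finset.sum_eq_sum_iff_of_le termle).1 hphieq
  have hzero : ∀ k ∈ (univ : Finset (Fin (S.n j))), max (mmS S θ j k - lam' j) 0 = 0 := by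
    intro k hk
    by_contra hne
    have hgt : 0 < max (mmS S θ j k - lam' j) 0 :=
      lt_of_le_of_ne (le_max_right _ _) (Ne.symm hne)
    have hm : lam' j < mmS S θ j k := by
      by_contra hle
      push_neg at hle
      rw [max_eq_right (by linarith)] at hgt
      exact lt_irrefl _ hgt
    have := hterm k hk
    rw [max_eq_left (by linarith), max_eq_left (by linarith)] at this
    linarith
  have hphi0 : phiS S θ j (lam' j) = 0 := Finset.sum_eq_zero hzero
  have hSpos : 0 < ∑ i, lam' i :=
    lt_of_lt_of_le hpos (Finset.single_le_sum (fun i _ => h1' i) (mem_univ j))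
  have := eta_nonneg S j
  rw [hphi0] at heq
  linarith

lemma kkt_lam_unique {lam lam' : Fin S.J → ℝ}
    (h1 : ∀ j, 0 ≤ lam j) (h1' : ∀ j, 0 ≤ lam' j)
    (h4 : ∀ j, phiS S θ j (lam j) ≤ (∑ i, lam i) + S.η j)
    (h4' : ∀ j, phiS S θ j (lam' j) ≤ (∑ i, lam' i) + S.η j)
    (h5 : ∀ j, 0 < lam j → (∑ i, lam i) + S.η j = phiS S θ j (lam j))
    (h5' : ∀ j, 0 < lam' j → (∑ i, lam' i) + S.η j = phiS S θ j (lam' j))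
    (hsum : ∑ i, lam i = ∑ i, lam' i) : lam = lam' := by
  funext j
  have hA := kkt_lam_not_lt S θ h1 h1' h4 h5' hsum j
  have hB := kkt_lam_not_lt S θ h1' h1 h4' h5 hsum.symm j
  exact le_antisymm (not_lt.1 hB) (not_lt.1 hA)

end Aux


/-- for every `θ ≥ 0` there is exactly one pair `(p̃, λ)` satisfying the KKT
conditions at `θ`, and its first component is the projection of `v_θ` onto the
expanded core. -/
theorem kkt_unique_and_proj (S : StarSetting) (θ : ℝ) (hθ : 0 ≤ θ) :
    (∃! pl : EuclideanSpace ℝ S.Idx × (Fin S.J → ℝ), S.KKT θ pl.1 pl.2) ∧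
    ∀ (p : EuclideanSpace ℝ S.Idx) (lam : Fin S.J → ℝ),
      S.KKT θ p lam → IsProjOn S.expandedK (S.vick θ) p := by
  obtain ⟨lam, hl0, hl4, hl5⟩ := exists_lam S θ hθ
  set p : EuclideanSpace ℝ S.Idx := WithLp.toLp 2 (fun i => Option.elim i (S.v0 + ∑ j, lam j)
    fun jk => min (S.vick θ (some jk) + lam jk.1) (S.b jk.1 jk.2)) with hp
  have hkkt : S.KKT θ p lam :=
    ⟨hl0, rfl, fun j k => rfl, hl4, hl5⟩
  constructor
  · refine ⟨(p, lam), hkkt, ?_⟩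
    rintro ⟨q, mu⟩ hq
    obtain ⟨m1, m2, m3, m4, m5⟩ := hq
    have hq' : S.KKT θ q mu := ⟨m1, m2, m3, m4, m5⟩
    have hpq : q = p := kkt_p_unique S θ hq' hkkt
    have hsum : ∑ i, mu i = ∑ i, lam i := by
      have e1 : q none = S.v0 + ∑ j, mu j := m2
      have e2 : p none = S.v0 + ∑ j, lam j := hkkt.2.1
      rw [hpq] at e1; rw [e2] at e1; linarith
    have hmu : mu = lam := kkt_lam_unique S θ m1 hl0 m4 hl4 m5 hl5 hsum
    exact Prod.ext hpq hmu
  · intro p' lam' h'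
    exact kkt_isProjOn S θ h'
end

section
/- In the star network setting, if θ > 0 and (p̃, λ) satisfies the KKT conditions at θ, then η_j + θ > λ_j for every j ∈ {1,…,J}. -/
/-- if `(p̃, λ)` satisfies the KKT conditions at `θ > 0`, then
`η_j + θ > λ_j` for every `j`. -/
theorem kkt_lam_lt_eta_add_theta (S : StarSetting) (θ : ℝ) (hθ : 0 < θ)
    (p : EuclideanSpace ℝ S.Idx) (lam : Fin S.J → ℝ)
    (h : S.KKT θ p lam) :
    ∀ j, lam j < S.η j + θ := by
  obtain ⟨hlam, hp0, hpk, hineq, heq⟩ := h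
  intro j
  by_contra hcon
  push_neg at hcon
  have hηj : 0 ≤ S.η j := by
    have h1 : S.C j - ∑ k, S.b j k ≤ S.v0 :=
      le_trans (Finset.le_sup' (fun j => S.C j - ∑ k, S.b j k) (Finset.mem_univ j)) (le_max_right _ _)
    simp only [StarSetting.η]
    linarith
  have hlamj : 0 < lam j := lt_of_lt_of_le (by linarith) hcon
  have hsum0 : ∑ k, max (min (S.η j + θ) (S.Δ j k) - lam j) 0 = 0 := by
    apply Finset.sum_eq_zero
    intro k _
    have hle : min (S.η j + θ) (S.Δ j k) - lam j ≤ 0 := by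
      have := min_le_left (S.η j + θ) (S.Δ j k); linarith
    exact max_eq_right hle
  have hE := heq j hlamj
  rw [hsum0] at hE
  have hsumlam : lam j ≤ ∑ i, lam i :=
    Finset.single_le_sum (fun i _ => hlam i) (Finset.mem_univ j)
  linarith
end

section
/- In the star network setting, letting λ_{j,θ} denote the (unique) Lagrange multipliers satisfying the KKT conditions at θ and σ_θ := Σ_{j=1}^J λ_{j,θ}, the function θ ↦ σ_θ is nondecreasing on [0,∞): for all 0 ≤ θ ≤ θ', σ_θ ≤ σ_{θ'}. -/
/-- the sum of the KKT Lagrange multipliers, `σ_θ = Σ_j λ_{j,θ}`, is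
nondecreasing on `[0,∞)`. -/
theorem kkt_sigma_monotone (S : StarSetting)
    (lam : ℝ → Fin S.J → ℝ)
    (hlam : ∀ θ : ℝ, 0 ≤ θ → ∃ p : EuclideanSpace ℝ S.Idx, S.KKT θ p (lam θ)) :
    ∀ θ θ' : ℝ, 0 ≤ θ → θ ≤ θ' → ∑ j, lam θ j ≤ ∑ j, lam θ' j := by
  intro θ θ' hθ hθθ'
  obtain ⟨p, hp⟩ := hlam θ hθ
  obtain ⟨p', hp'⟩ := hlam θ' (le_trans hθ hθθ')
  by_contra h
  push_neg at h
  obtain ⟨j, -, hj⟩ := Finset.exists_lt_of_sum_lt h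
  have hjpos : 0 < lam θ j := lt_of_le_of_lt (hp'.1 j) hj
  have heq := hp.2.2.2.2 j hjpos
  have hle := hp'.2.2.2.1 j
  have key : ∑ k, max (min (S.η j + θ) (S.Δ j k) - lam θ j) 0
      ≤ ∑ k, max (min (S.η j + θ') (S.Δ j k) - lam θ' j) 0 := by
    apply Finset.sum_le_sum
    intro k _
    apply max_le_max _ le_rfl
    have : min (S.η j + θ) (S.Δ j k) ≤ min (S.η j + θ') (S.Δ j k) :=
      min_le_min (by linarith) le_rfl
    linarith [hj.le]
  have : (∑ i, lam θ i) + S.η j ≤ (∑ i, lam θ' i) + S.η j :=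
    heq ▸ le_trans key hle
  linarith
end

section
/- In the star network setting, the MRC-variant price of buyer zero increases at rate at most one in buyer zero's bid. Precisely: the function θ ↦ p^{MRC}_{0,θ} on [0,∞) is piecewise linear (there exist finitely many points 0 = t_0 < t_1 < ⋯ < t_m such that θ ↦ p^{MRC}_{0,θ} is affine on each interval [t_i, t_{i+1}] and on [t_m, ∞)), and for all real numbers θ, θ' with 0 ≤ θ ≤ θ' one has p^{MRC}_{0,θ'} − p^{MRC}_{0,θ} ≤ θ' − θ. -/
namespace PLAux

def ev (l : ℝ × ℝ) (x : ℝ) : ℝ := l.1 * x + l.2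

lemma ev_continuous (l : ℝ × ℝ) : Continuous (ev l) := by
  unfold ev; fun_prop

inductive MM : (ℝ → ℝ) → Prop
  | affine (a b : ℝ) : MM (fun x => a * x + b)
  | add {f g} : MM f → MM g → MM (fun x => f x + g x)
  | max {f g} : MM f → MM g → MM (fun x => max (f x) (g x))
  | min {f g} : MM f → MM g → MM (fun x => min (f x) (g x))

def NoX (L : Finset (ℝ × ℝ)) (p q : ℝ) : Prop :=
  ∀ l ∈ L, ∀ l' ∈ L, (∃ z ∈ Set.Ioo p q, ev l z = ev l' z) → l = l'

lemma NoX.mono {L L' : Finset (ℝ × ℝ)} {p q : ℝ} (h : NoX L p q) (hsub : L' ⊆ L) :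
    NoX L' p q := fun l hl l' hl' hz => h l (hsub hl) l' (hsub hl') hz

lemma affine_sign (l l' : ℝ × ℝ) (p q : ℝ) (hpq : p < q)
    (h : ∀ z ∈ Set.Ioo p q, ev l z = ev l' z → l = l') :
    (∀ x ∈ Set.Icc p q, ev l x ≤ ev l' x) ∨ (∀ x ∈ Set.Icc p q, ev l' x ≤ ev l x) := by
  by_contra hcon
  push_neg at hcon
  obtain ⟨⟨x₁, hx₁, h₁⟩, ⟨x₂, hx₂, h₂⟩⟩ := hcon
  -- g := ev l - ev l' is positive at x₁, negative at x₂
  set g : ℝ → ℝ := fun x => ev l x - ev l' x with hg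
  have hgc : Continuous g := (ev_continuous l).sub (ev_continuous l')
  have h₁' : 0 < g x₁ := by simp [hg]; linarith
  have h₂' : g x₂ < 0 := by simp [hg]; linarith
  have key : ∃ z ∈ Set.Ioo p q, g z = 0 := by
    rcases lt_trichotomy x₁ x₂ with hlt | heq | hgt
    · have := intermediate_value_Ioo (le_of_lt hlt) hgc.continuousOn (a := x₁) (b := x₂)
      have h0 : (0:ℝ) ∈ Set.Ioo (g x₂) (g x₁) → True := fun _ => trivial
      have h0' : (0:ℝ) ∈ g '' Set.Ioo x₁ x₂ := by
        have := intermediate_value_Ioo' (le_of_lt hlt) hgc.continuousOn (a := x₁) (b := x₂)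
        exact this ⟨h₂', h₁'⟩
      obtain ⟨z, hz, hz0⟩ := h0'
      exact ⟨z, ⟨lt_of_le_of_lt hx₁.1 hz.1, lt_of_lt_of_le hz.2 hx₂.2⟩, hz0⟩
    · exfalso; rw [heq] at h₁'; linarith
    · have h0' : (0:ℝ) ∈ g '' Set.Ioo x₂ x₁ := by
        have := intermediate_value_Ioo (le_of_lt hgt) hgc.continuousOn (a := x₂) (b := x₁)
        exact this ⟨h₂', h₁'⟩
      obtain ⟨z, hz, hz0⟩ := h0'
      exact ⟨z, ⟨lt_of_le_of_lt hx₂.1 hz.1, lt_of_lt_of_le hz.2 hx₁.2⟩, hz0⟩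
  obtain ⟨z, hz, hz0⟩ := key
  have hll : l = l' := h z hz (by
    have : ev l z - ev l' z = 0 := hz0
    linarith)
  rw [hll] at h₁
  linarith

lemma lines_rep {f0 : ℝ → ℝ} (hf : MM f0) :
    ∃ L : Finset (ℝ × ℝ), ∀ p q : ℝ, p < q → NoX L p q →
      ∃ l ∈ L, ∀ x ∈ Set.Icc p q, f0 x = ev l x := by
  induction hf with
  | affine a b =>
      exact ⟨{(a, b)}, fun p q _ _ => ⟨(a, b), Finset.mem_singleton_self _, fun x _ => rfl⟩⟩
  | @add f g hf hg IHf IHg =>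
      obtain ⟨Lf, Pf⟩ := IHf
      obtain ⟨Lg, Pg⟩ := IHg
      refine ⟨Lf ∪ Lg ∪ ((Lf ×ˢ Lg).image fun z => (z.1.1 + z.2.1, z.1.2 + z.2.2)),
        fun p q hpq hC => ?_⟩
      obtain ⟨l₁, hl₁, h₁⟩ := Pf p q hpq (hC.mono (by intro x hx; simp [Finset.mem_union]; tauto))
      obtain ⟨l₂, hl₂, h₂⟩ := Pg p q hpq (hC.mono (by intro x hx; simp [Finset.mem_union]; tauto))
      refine ⟨(l₁.1 + l₂.1, l₁.2 + l₂.2), ?_, fun x hx => ?_⟩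
      · simp only [Finset.mem_union, Finset.mem_image, Finset.mem_product]
        exact Or.inr ⟨(l₁, l₂), ⟨hl₁, hl₂⟩, rfl⟩
      · show f x + g x = ev (l₁.1 + l₂.1, l₁.2 + l₂.2) x
        rw [h₁ x hx, h₂ x hx]; unfold ev; ring
  | @max f g hf hg IHf IHg =>
      obtain ⟨Lf, Pf⟩ := IHf
      obtain ⟨Lg, Pg⟩ := IHg
      refine ⟨Lf ∪ Lg, fun p q hpq hC => ?_⟩
      obtain ⟨l₁, hl₁, h₁⟩ := Pf p q hpq (hC.mono Finset.subset_union_left)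
      obtain ⟨l₂, hl₂, h₂⟩ := Pg p q hpq (hC.mono Finset.subset_union_right)
      have hsign := affine_sign l₁ l₂ p q hpq
        (fun z hz hevz => hC l₁ (Finset.mem_union_left _ hl₁) l₂ (Finset.mem_union_right _ hl₂)
          ⟨z, hz, hevz⟩)
      rcases hsign with hle | hle
      · exact ⟨l₂, Finset.mem_union_right _ hl₂, fun x hx => by
          show max (f x) (g x) = ev l₂ x
          rw [h₁ x hx, h₂ x hx]; exact max_eq_right (hle x hx)⟩
      · exact ⟨l₁, Finset.mem_union_left _ hl₁, fun x hx => by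
          show max (f x) (g x) = ev l₁ x
          rw [h₁ x hx, h₂ x hx]; exact max_eq_left (hle x hx)⟩
  | @min f g hf hg IHf IHg =>
      obtain ⟨Lf, Pf⟩ := IHf
      obtain ⟨Lg, Pg⟩ := IHg
      refine ⟨Lf ∪ Lg, fun p q hpq hC => ?_⟩
      obtain ⟨l₁, hl₁, h₁⟩ := Pf p q hpq (hC.mono Finset.subset_union_left)
      obtain ⟨l₂, hl₂, h₂⟩ := Pg p q hpq (hC.mono Finset.subset_union_right)
      have hsign := affine_sign l₁ l₂ p q hpq
        (fun z hz hevz => hC l₁ (Finset.mem_union_left _ hl₁) l₂ (Finset.mem_union_right _ hl₂)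
          ⟨z, hz, hevz⟩)
      rcases hsign with hle | hle
      · exact ⟨l₁, Finset.mem_union_left _ hl₁, fun x hx => by
          show min (f x) (g x) = ev l₁ x
          rw [h₁ x hx, h₂ x hx]; exact min_eq_left (hle x hx)⟩
      · exact ⟨l₂, Finset.mem_union_right _ hl₂, fun x hx => by
          show min (f x) (g x) = ev l₂ x
          rw [h₁ x hx, h₂ x hx]; exact min_eq_right (hle x hx)⟩

lemma ev_eq_of_two_points {l l' : ℝ × ℝ} {p : ℝ}
    (h1 : ev l p = ev l' p) (h2 : ev l (p + 1) = ev l' (p + 1)) : ∀ x, ev l x = ev l' x := by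
  unfold ev at *
  intro x
  have ha : l.1 = l'.1 := by linarith
  have hb : l.2 = l'.2 := by rw [ha] at h1; linarith
  rw [ha, hb]

theorem MM.piecewiseLinearOnIci {f : ℝ → ℝ} (hf : MM f) : PiecewiseLinearOnIci f := by
  obtain ⟨L, P⟩ := lines_rep hf
  classical
  set cross : (ℝ × ℝ) × (ℝ × ℝ) → ℝ := fun z =>
    if z.1.1 = z.2.1 then 0 else (z.2.2 - z.1.2) / (z.1.1 - z.2.1) with hcross
  set T : Finset ℝ := insert (0:ℝ) (((L ×ˢ L).image cross).filter fun z => 0 < z) with hT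
  have hT0 : (0:ℝ) ∈ T := Finset.mem_insert_self _ _
  have hTnonneg : ∀ z ∈ T, 0 ≤ z := by
    intro z hz
    rw [hT] at hz
    rcases Finset.mem_insert.mp hz with h | h
    · exact h.ge
    · exact (Finset.mem_filter.mp h).2.le
  have hTcard : 0 < T.card := Finset.card_pos.mpr ⟨0, hT0⟩
  set m : ℕ := T.card - 1 with hm
  have hcard : T.card = m + 1 := (Nat.succ_pred_eq_of_pos hTcard).symm
  set e := T.orderIsoOfFin hcard with he
  set t : Fin (m + 1) → ℝ := fun i => (e i : ℝ) with ht
  have htmono : StrictMono t := fun i j hij => by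
    exact_mod_cast e.strictMono hij
  have ht0 : t 0 = 0 := by
    have h1 : t 0 ≤ t (e.symm ⟨0, hT0⟩) := htmono.monotone (Fin.zero_le _)
    have h1' : t (e.symm ⟨0, hT0⟩) = 0 := by
      show ((e (e.symm ⟨0, hT0⟩) : { x // x ∈ T }) : ℝ) = 0
      rw [OrderIso.apply_symm_apply]
    have h2 : 0 ≤ t 0 := hTnonneg _ (e 0).2
    linarith
  -- key: any point in T equals some t i
  have hmemT : ∀ z ∈ T, ∃ i, t i = z := fun z hz => ⟨e.symm ⟨z, hz⟩, by
    show ((e (e.symm ⟨z, hz⟩) : { x // x ∈ T }) : ℝ) = z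
    rw [OrderIso.apply_symm_apply]⟩
  -- crossings are in T
  have hcrossT : ∀ l ∈ L, ∀ l' ∈ L, ∀ z : ℝ, 0 < z → ev l z = ev l' z → l.1 ≠ l'.1 → z ∈ T := by
    intro l hl l' hl' z hz hev hne
    have : z = cross (l, l') := by
      rw [hcross]; simp only [if_neg hne]
      unfold ev at hev
      rw [eq_div_iff (sub_ne_zero.mpr hne)]
      linarith
    rw [hT]
    refine Finset.mem_insert_of_mem (Finset.mem_filter.mpr ⟨?_, hz⟩)
    rw [this]
    exact Finset.mem_image_of_mem _ (Finset.mem_product.mpr ⟨hl, hl'⟩)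
  have hNoX : ∀ p q : ℝ, 0 ≤ p → p < q → (∀ z ∈ T, z ∉ Set.Ioo p q) → NoX L p q := by
    intro p q hp hpq hgap l hl l' hl' ⟨z, hz, hev⟩
    by_cases hne : l.1 = l'.1
    · have : l.2 = l'.2 := by unfold ev at hev; rw [hne] at hev; linarith
      exact Prod.ext hne this
    · exfalso
      have hzpos : 0 < z := lt_of_le_of_lt hp hz.1
      exact hgap z (hcrossT l hl l' hl' z hzpos hev hne) hz
  refine ⟨m, t, ht0, htmono, ?_, ?_⟩
  · intro i
    have hlt : t i.castSucc < t i.succ := htmono Fin.castSucc_lt_succ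
    have hgap : ∀ z ∈ T, z ∉ Set.Ioo (t i.castSucc) (t i.succ) := by
      intro z hzT hzIoo
      obtain ⟨i', hi'⟩ := hmemT z hzT
      rw [← hi'] at hzIoo
      have h1 : i.castSucc < i' := htmono.lt_iff_lt.mp hzIoo.1
      have h2 : i' < i.succ := htmono.lt_iff_lt.mp hzIoo.2
      have := lt_of_le_of_lt (Fin.castSucc_lt_iff_succ_le.mp h1) h2
      exact lt_irrefl _ this
    have hp0 : 0 ≤ t i.castSucc := by rw [← ht0]; exact htmono.monotone (Fin.zero_le _)
    obtain ⟨l, _, hl⟩ := P _ _ hlt (hNoX _ _ hp0 hlt hgap)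
    exact ⟨l.1, l.2, fun x hx => hl x hx⟩
  · set p := t (Fin.last m) with hp
    have hp0 : 0 ≤ p := by rw [← ht0]; exact htmono.monotone (Fin.zero_le _)
    have hmax : ∀ z ∈ T, z ≤ p := by
      intro z hzT
      obtain ⟨i', hi'⟩ := hmemT z hzT
      rw [← hi']
      exact htmono.monotone (Fin.le_last i')
    have hgap : ∀ q : ℝ, ∀ z ∈ T, z ∉ Set.Ioo p q := fun q z hz hzI =>
      absurd (hmax z hz) (not_le.mpr hzI.1)
    have hNoXq : ∀ q : ℝ, p < q → NoX L p q := fun q hq =>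
      hNoX p q hp0 hq (hgap q)
    obtain ⟨l, hlL, hl⟩ := P p (p + 1) (by linarith) (hNoXq _ (by linarith))
    refine ⟨l.1, l.2, fun x hx => ?_⟩
    rcases le_or_gt x (p + 1) with hxle | hxgt
    · exact hl x ⟨hx, hxle⟩
    · obtain ⟨l', hl'L, hl'⟩ := P p x (by linarith [hx.out]) (hNoXq _ (by linarith [hx.out]))
      have e1 : ev l' p = ev l p := by
        rw [← hl p ⟨le_refl p, by linarith⟩, ← hl' p ⟨le_refl p, by linarith [hx.out]⟩]
      have e2 : ev l' (p+1) = ev l (p+1) := by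
        rw [← hl (p+1) ⟨by linarith, le_refl _⟩, ← hl' (p+1) ⟨by linarith, by linarith⟩]
      have := ev_eq_of_two_points e1 e2
      rw [hl' x ⟨hx.out, le_refl x⟩, this x]
      rfl

-- Finset sup' of MM functions is MM
lemma MM.sup' {ι : Type*} {s : Finset ι} (hs : s.Nonempty) {F : ι → ℝ → ℝ}
    (hF : ∀ i ∈ s, MM (F i)) : MM (fun x => s.sup' hs (fun i => F i x)) := by
  classical
  induction hs using Finset.Nonempty.cons_induction with
  | singleton i => simpa using hF i (by simp)
  | cons i s his hs IH =>
      have h1 : MM (F i) := hF i (by simp)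
      have h2 : MM (fun x => s.sup' hs fun j => F j x) :=
        IH (fun j hj => hF j (by simp [hj]))
      have h3 := MM.max h1 h2
      have heq : (fun x => (Finset.cons i s his).sup' (by simp) (fun j => F j x))
          = fun x => Max.max (F i x) (s.sup' hs fun j => F j x) := by
        funext x
        rw [Finset.sup'_cons hs]
      rw [heq]
      exact h3

lemma MM.sum {ι : Type*} {s : Finset ι} {F : ι → ℝ → ℝ}
    (hF : ∀ i ∈ s, MM (F i)) : MM (fun x => ∑ i ∈ s, F i x) := by
  classical
  induction s using Finset.induction_on with
  | empty => simpa using MM.affine 0 0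
  | @insert a s' hnotmem IH =>
      have h1 : MM (F a) := hF a (by simp)
      have h2 : MM (fun x => ∑ i ∈ s', F i x) := IH (fun j hj => hF j (by simp [hj]))
      have h3 := MM.add h1 h2
      have heq : (fun x => ∑ i ∈ insert a s', F i x)
          = fun x => F a x + ∑ i ∈ s', F i x := by
        funext x
        rw [Finset.sum_insert hnotmem]
      rw [heq]
      exact h3

end PLAux


namespace Proof12

open StarSetting Finset

variable (S : StarSetting)

/-! ### basic index facts -/

lemma univJ_nonempty : (Finset.univ : Finset (Fin S.J)).Nonempty :=
  ⟨⟨0, S.hJ⟩, Finset.mem_univ _⟩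

lemma univn_nonempty (j : Fin S.J) : (Finset.univ : Finset (Fin (S.n j))).Nonempty :=
  ⟨⟨0, S.hn j⟩, Finset.mem_univ _⟩

lemma eta_nonneg (j : Fin S.J) : 0 ≤ S.η j := by
  have h1 : S.C j - ∑ k, S.b j k ≤ S.v0 := by
    refine le_trans (Finset.le_sup' (fun j => S.C j - ∑ k, S.b j k) (Finset.mem_univ j)) ?_
    exact le_max_right _ _
  unfold StarSetting.η
  linarith

lemma delta_nonneg (j : Fin S.J) (k : Fin (S.n j)) : 0 ≤ S.Δ j k :=
  sub_nonneg.mpr (S.h_bid j k)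

/-- total surplus on arm j -/
noncomputable def Dt (j : Fin S.J) : ℝ := ∑ k, S.Δ j k

lemma Dt_nonneg (j : Fin S.J) : 0 ≤ Dt S j :=
  Finset.sum_nonneg fun k _ => delta_nonneg S j k

noncomputable def cc (j : Fin S.J) : ℝ := Dt S j - S.η j

noncomputable def cmax : ℝ := Finset.univ.sup' (univJ_nonempty S) (cc S)

noncomputable def jst : Fin S.J :=
  Classical.choose (Finset.exists_mem_eq_sup' (univJ_nonempty S) (cc S))

lemma cc_jst : cmax S = cc S (jst S) :=
  (Classical.choose_spec (Finset.exists_mem_eq_sup' (univJ_nonempty S) (cc S))).2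

lemma cc_le_cmax (j : Fin S.J) : cc S j ≤ cmax S :=
  Finset.le_sup' (cc S) (Finset.mem_univ j)

noncomputable def AA : ℝ :=
  if h : (Finset.univ.erase (jst S)).Nonempty
  then max 0 ((Finset.univ.erase (jst S)).sup' h (cc S)) else 0

noncomputable def BB : ℝ := max 0 (cmax S)

lemma AA_nonneg : 0 ≤ AA S := by
  unfold AA; split <;> simp

lemma BB_nonneg : 0 ≤ BB S := le_max_left _ _

lemma AA_le_BB : AA S ≤ BB S := by
  unfold AA BB
  split
  · rename_i h
    refine max_le (le_max_left _ _) ?_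
    refine le_trans (Finset.sup'_le h (cc S) fun j hj => cc_le_cmax S j) (le_max_right _ _)
  · exact le_max_left _ _

lemma cc_le_AA (j : Fin S.J) (hj : j ≠ jst S) : cc S j ≤ AA S := by
  unfold AA
  have hmem : j ∈ Finset.univ.erase (jst S) := Finset.mem_erase.mpr ⟨hj, Finset.mem_univ _⟩
  rw [dif_pos ⟨j, hmem⟩]
  exact le_trans (Finset.le_sup' (cc S) hmem) (le_max_right _ _)

/-- two arms have `cc ≥ z` whenever `z < AA` reachable: second max property -/
lemma exists_second (z : ℝ) (hz : z ≤ AA S) (hApos : 0 < AA S) :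
    ∃ j, j ≠ jst S ∧ z ≤ cc S j := by
  unfold AA at hz hApos
  by_cases h : (Finset.univ.erase (jst S)).Nonempty
  · rw [dif_pos h] at hz hApos
    obtain ⟨j, hj, hje⟩ := Finset.exists_mem_eq_sup' h (cc S)
    refine ⟨j, (Finset.mem_erase.mp hj).1, ?_⟩
    rcases le_or_gt z 0 with h0 | h0
    · exact le_trans h0 (by
        by_contra hcon
        push_neg at hcon
        have : max 0 ((Finset.univ.erase (jst S)).sup' h (cc S)) = 0 := by
          rw [max_eq_left]
          rw [hje]; linarith
        rw [this] at hApos; linarith)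
    · have : max 0 ((Finset.univ.erase (jst S)).sup' h (cc S))
          = (Finset.univ.erase (jst S)).sup' h (cc S) := by
        rcases max_cases 0 ((Finset.univ.erase (jst S)).sup' h (cc S)) with ⟨h1, h2⟩ | ⟨h1, h2⟩
        · rw [h1] at hz; linarith
        · exact h1
      rw [this] at hz
      rw [← hje]; exact hz
  · rw [dif_neg h] at hApos; linarith

/-! ### the one-dimensional revenue function -/

noncomputable def mmf (j : Fin S.J) (z : ℝ) : ℝ := min (S.η j + z) (Dt S j)

lemma mmf_mono (j : Fin S.J) : Monotone (mmf S j) := fun a b hab =>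
  min_le_min (by linarith) (le_refl _)

lemma mmf_nonneg (j : Fin S.J) (z : ℝ) (hz : 0 ≤ z) : 0 ≤ mmf S j z :=
  le_min (by linarith [eta_nonneg S j]) (Dt_nonneg S j)

lemma mmf_lip (j : Fin S.J) (z z' : ℝ) (h : z ≤ z') : mmf S j z' - mmf S j z ≤ z' - z := by
  unfold mmf
  rcases le_total (S.η j + z) (Dt S j) with h1 | h1 <;>
    rcases le_total (S.η j + z') (Dt S j) with h2 | h2 <;>
    simp [min_eq_left, min_eq_right, h1, h2] <;> linarith

lemma mmf_eq_lin (j : Fin S.J) (z : ℝ) (hz : z ≤ cc S j) : mmf S j z = S.η j + z := by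
  unfold mmf; rw [min_eq_left]; unfold cc at hz; linarith

lemma mmf_eq_const (j : Fin S.J) (z : ℝ) (hz : cc S j ≤ z) : mmf S j z = Dt S j := by
  unfold mmf; rw [min_eq_right]; unfold cc at hz; linarith

noncomputable def hh (z : ℝ) : ℝ := z - ∑ j, mmf S j z

lemma hh_dec (z z' : ℝ) (h0 : 0 ≤ z) (hzz : z < z') (hz' : z' ≤ AA S) : hh S z' < hh S z := by
  have hApos : 0 < AA S := lt_of_lt_of_le (lt_of_le_of_lt h0 hzz) hz'
  obtain ⟨j2, hj2ne, hj2⟩ := exists_second S z' hz' hApos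
  have hjst : z' ≤ cc S (jst S) := le_trans hj2 (le_trans (cc_le_cmax S j2) (cc_jst S).le)
  have hsum : z' - z + (z' - z) ≤ ∑ j, (mmf S j z' - mmf S j z) := by
    have hpair : ∑ j ∈ ({jst S, j2} : Finset (Fin S.J)), (mmf S j z' - mmf S j z)
        = (mmf S (jst S) z' - mmf S (jst S) z) + (mmf S j2 z' - mmf S j2 z) :=
      Finset.sum_pair (fun hc => hj2ne hc.symm)
    have h1 : mmf S (jst S) z' - mmf S (jst S) z = z' - z := by
      rw [mmf_eq_lin S _ _ hjst, mmf_eq_lin S _ _ (le_trans hzz.le hjst)]; ring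
    have h2 : mmf S j2 z' - mmf S j2 z = z' - z := by
      rw [mmf_eq_lin S _ _ hj2, mmf_eq_lin S _ _ (le_trans hzz.le hj2)]; ring
    have hsub : ∑ j ∈ ({jst S, j2} : Finset (Fin S.J)), (mmf S j z' - mmf S j z)
        ≤ ∑ j, (mmf S j z' - mmf S j z) := by
      refine Finset.sum_le_sum_of_subset_of_nonneg (Finset.subset_univ _) ?_
      intro j _ _
      exact sub_nonneg.mpr (mmf_mono S j hzz.le)
    rw [hpair, h1, h2] at hsub
    exact hsub
  unfold hh
  rw [Finset.sum_sub_distrib] at hsum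
  linarith

lemma hh_flat (z z' : ℝ) (hz : AA S ≤ z) (hzz : z ≤ z') (hz' : z' ≤ BB S) : hh S z' = hh S z := by
  rcases le_or_gt (cmax S) 0 with hc | hc
  · -- BB = 0, so z = z'
    have hBB : BB S = 0 := max_eq_left hc
    have h1 : z = z' := le_antisymm hzz (by
      have := AA_nonneg S
      rw [hBB] at hz'
      linarith)
    rw [h1]
  · have hBB : BB S = cc S (jst S) := by
      rw [← cc_jst S]; exact max_eq_right hc.le
    have hsum : ∑ j, (mmf S j z' - mmf S j z) = z' - z := by
      have : ∀ j, mmf S j z' - mmf S j z = if j = jst S then z' - z else 0 := by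
        intro j
        by_cases hj : j = jst S
        · rw [if_pos hj, hj]
          rw [mmf_eq_lin S _ _ (hBB ▸ hz'), mmf_eq_lin S _ _ (le_trans hzz (hBB ▸ hz'))]
          ring
        · rw [if_neg hj]
          have hcj : cc S j ≤ z := le_trans (cc_le_AA S j hj) hz
          rw [mmf_eq_const S _ _ hcj, mmf_eq_const S _ _ (le_trans hcj hzz)]
          ring
      rw [Finset.sum_congr rfl (fun j _ => this j)]
      simp
    unfold hh
    rw [Finset.sum_sub_distrib] at hsum
    linarith

lemma hh_inc (z z' : ℝ) (hz : BB S ≤ z) (hzz : z < z') : hh S z < hh S z' := by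
  have hsum : ∑ j, (mmf S j z' - mmf S j z) = 0 := by
    refine Finset.sum_eq_zero fun j _ => ?_
    have hcj : cc S j ≤ z := le_trans (le_trans (cc_le_cmax S j) (le_max_right _ _)) hz
    rw [mmf_eq_const S _ _ hcj, mmf_eq_const S _ _ (le_trans hcj hzz.le)]
    ring
  unfold hh
  rw [Finset.sum_sub_distrib] at hsum
  linarith

/-! ### water-filling multipliers -/

/-- Vickrey surplus `y^v` -/
noncomputable def gg (j : Fin S.J) (θ : ℝ) (k : Fin (S.n j)) : ℝ :=
  min (S.η j + θ) (S.Δ j k)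

lemma gg_nonneg (j : Fin S.J) (θ : ℝ) (hθ : 0 ≤ θ) (k : Fin (S.n j)) : 0 ≤ gg S j θ k :=
  le_min (by linarith [eta_nonneg S j]) (delta_nonneg S j k)

lemma gg_le_delta (j : Fin S.J) (θ : ℝ) (k : Fin (S.n j)) : gg S j θ k ≤ S.Δ j k :=
  min_le_right _ _

lemma gg_mono (j : Fin S.J) (k : Fin (S.n j)) {θ θ' : ℝ} (h : θ ≤ θ') :
    gg S j θ k ≤ gg S j θ' k := min_le_min (by linarith) (le_refl _)

lemma gg_lip (j : Fin S.J) (k : Fin (S.n j)) {θ θ' : ℝ} (h : θ ≤ θ') :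
    gg S j θ' k ≤ gg S j θ k + (θ' - θ) := by
  unfold gg
  rcases le_total (S.η j + θ) (S.Δ j k) with h1 | h1 <;>
    rcases le_total (S.η j + θ') (S.Δ j k) with h2 | h2 <;>
    simp [min_eq_left, min_eq_right, h1, h2] <;> linarith

noncomputable def psi (j : Fin S.J) (θ : ℝ) (l : ℝ) : ℝ :=
  ∑ k, max (gg S j θ k - l) 0

lemma psi_nonneg (j : Fin S.J) (θ l : ℝ) : 0 ≤ psi S j θ l :=
  Finset.sum_nonneg fun k _ => le_max_right _ _

lemma psi_antitone (j : Fin S.J) (θ : ℝ) : Antitone (psi S j θ) := by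
  intro l l' h
  refine Finset.sum_le_sum fun k _ => max_le_max (by linarith) (le_refl _)

lemma psi_continuous (j : Fin S.J) (θ : ℝ) : Continuous (psi S j θ) := by
  unfold psi
  refine continuous_finset_sum _ fun k _ => ?_
  exact (continuous_const.sub continuous_id).max continuous_const

lemma psi_zero (j : Fin S.J) (θ : ℝ) (hθ : 0 ≤ θ) : psi S j θ 0 = ∑ k, gg S j θ k := by
  unfold psi
  refine Finset.sum_congr rfl fun k _ => ?_
  rw [sub_zero, max_eq_left (gg_nonneg S j θ hθ k)]

lemma psi_top (j : Fin S.J) (θ : ℝ) : psi S j θ (S.η j + θ) = 0 := by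
  unfold psi
  refine Finset.sum_eq_zero fun k _ => ?_
  rw [max_eq_right]
  have := min_le_left (S.η j + θ) (S.Δ j k)
  unfold gg; linarith

/-- the water-filling level -/
noncomputable def lam (j : Fin S.J) (θ : ℝ) (s : ℝ) : ℝ :=
  sInf {l | 0 ≤ l ∧ psi S j θ l ≤ s}

lemma lam_set_nonempty (j : Fin S.J) (θ : ℝ) (s : ℝ) (hθ : 0 ≤ θ) (hs : 0 ≤ s) :
    {l | 0 ≤ l ∧ psi S j θ l ≤ s}.Nonempty := by
  refine ⟨S.η j + θ, by linarith [eta_nonneg S j], ?_⟩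
  rw [psi_top]; exact hs

lemma lam_set_bdd (j : Fin S.J) (θ : ℝ) (s : ℝ) :
    BddBelow {l | 0 ≤ l ∧ psi S j θ l ≤ s} := ⟨0, fun l hl => hl.1⟩

lemma lam_set_closed (j : Fin S.J) (θ : ℝ) (s : ℝ) :
    IsClosed {l | 0 ≤ l ∧ psi S j θ l ≤ s} := by
  have : {l | 0 ≤ l ∧ psi S j θ l ≤ s}
      = Set.Ici 0 ∩ (psi S j θ) ⁻¹' (Set.Iic s) := by
    ext l
    simp only [Set.mem_setOf_eq, Set.mem_inter_iff, Set.mem_Ici, Set.mem_preimage, Set.mem_Iic]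
  rw [this]
  exact isClosed_Ici.inter ((isClosed_Iic).preimage (psi_continuous S j θ))

lemma lam_mem (j : Fin S.J) (θ : ℝ) (s : ℝ) (hθ : 0 ≤ θ) (hs : 0 ≤ s) :
    0 ≤ lam S j θ s ∧ psi S j θ (lam S j θ s) ≤ s :=
  IsClosed.csInf_mem (lam_set_closed S j θ s) (lam_set_nonempty S j θ s hθ hs)
    (lam_set_bdd S j θ s)

lemma lam_nonneg (j : Fin S.J) (θ : ℝ) (s : ℝ) (hθ : 0 ≤ θ) (hs : 0 ≤ s) :
    0 ≤ lam S j θ s := (lam_mem S j θ s hθ hs).1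

lemma lam_le_of_psi_le (j : Fin S.J) (θ : ℝ) (s l : ℝ) (hl : 0 ≤ l)
    (h : psi S j θ l ≤ s) : lam S j θ s ≤ l :=
  csInf_le (lam_set_bdd S j θ s) ⟨hl, h⟩

lemma lam_eq (j : Fin S.J) (θ : ℝ) (s : ℝ) (hθ : 0 ≤ θ) (hs : 0 ≤ s)
    (hs' : s ≤ psi S j θ 0) : psi S j θ (lam S j θ s) = s := by
  obtain ⟨hl0, hle⟩ := lam_mem S j θ s hθ hs
  refine le_antisymm hle ?_
  by_contra hcon
  push_neg at hcon
  -- psi(lam) < s ; find l < lam with psi l < s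
  set lv := lam S j θ s with hlv
  have hlpos : 0 < lv := by
    rcases lt_or_eq_of_le hl0 with h | h
    · exact h
    · exfalso; rw [← h] at hcon; linarith
  have hopen : (psi S j θ) ⁻¹' (Set.Iio s) ∈ nhds lv := by
    refine (isOpen_Iio.preimage (psi_continuous S j θ)).mem_nhds ?_
    exact hcon
  obtain ⟨ε, hε, hball⟩ := Metric.mem_nhds_iff.mp hopen
  set l' := max 0 (lv - ε / 2) with hl'
  have hl'lt : l' < lv := by
    rw [hl']
    exact max_lt hlpos (by linarith)
  have hl'mem : l' ∈ Metric.ball lv ε := by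
    rw [Metric.mem_ball, Real.dist_eq, abs_lt]
    constructor
    · have : lv - ε / 2 ≤ l' := le_max_right _ _
      linarith
    · linarith
  have hpsil' : psi S j θ l' < s := hball hl'mem
  have : lv ≤ l' := lam_le_of_psi_le S j θ s l' (le_max_left _ _) hpsil'.le
  linarith

lemma lam_lip_theta (j : Fin S.J) (θ θ' : ℝ) (s : ℝ) (hθ : 0 ≤ θ) (hθ' : θ ≤ θ') (hs : 0 ≤ s) :
    lam S j θ' s ≤ lam S j θ s + (θ' - θ) := by
  refine lam_le_of_psi_le S j θ' s _ (by linarith [lam_nonneg S j θ s hθ hs]) ?_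
  have h1 : psi S j θ' (lam S j θ s + (θ' - θ)) ≤ psi S j θ (lam S j θ s) := by
    refine Finset.sum_le_sum fun k _ => ?_
    refine max_le_max ?_ (le_refl _)
    have := gg_lip S j k hθ'
    linarith
  exact le_trans h1 (lam_mem S j θ s hθ hs).2

/-! ### the explicit minimizer -/

noncomputable def xbar (θ : ℝ) : ℝ :=
  (Finset.univ : Finset (Finset (Fin (S.n (jst S))))).sup' ⟨∅, Finset.mem_univ _⟩
    fun K => ((∑ k ∈ K, gg S (jst S) θ k) - S.η (jst S)) / (K.card + 1)

lemma psi_xbar (θ : ℝ) (hθ : 0 ≤ θ) :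
    psi S (jst S) θ (xbar S θ) = S.η (jst S) + xbar S θ := by
  set j := jst S
  set x := xbar S θ with hx
  refine le_antisymm ?_ ?_
  · -- ≤ : use K* = {k | x < g k}
    set K : Finset (Fin (S.n j)) := Finset.univ.filter (fun k => x < gg S j θ k) with hK
    have hxK : ((∑ k ∈ K, gg S j θ k) - S.η j) / (K.card + 1) ≤ x := by
      rw [hx]; unfold xbar
      exact Finset.le_sup'
        (fun K : Finset (Fin (S.n (jst S))) =>
          ((∑ k ∈ K, gg S (jst S) θ k) - S.η (jst S)) / (K.card + 1))
        (Finset.mem_univ K)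
    have hcard : (0:ℝ) < K.card + 1 := by positivity
    rw [div_le_iff₀ hcard] at hxK
    have hpsi : psi S j θ x = ∑ k ∈ K, (gg S j θ k - x) := by
      unfold psi
      rw [← Finset.sum_filter_add_sum_filter_not Finset.univ (fun k => x < gg S j θ k)]
      have h1 : ∑ k ∈ Finset.univ.filter (fun k => x < gg S j θ k), max (gg S j θ k - x) 0
          = ∑ k ∈ K, (gg S j θ k - x) := by
        refine Finset.sum_congr rfl fun k hk => ?_
        rw [max_eq_left]
        have := (Finset.mem_filter.mp hk).2
        linarith
      have h2 : ∑ k ∈ Finset.univ.filter (fun k => ¬ x < gg S j θ k), max (gg S j θ k - x) 0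
          = 0 := by
        refine Finset.sum_eq_zero fun k hk => ?_
        rw [max_eq_right]
        have := (Finset.mem_filter.mp hk).2
        push_neg at this
        linarith
      rw [h1, h2, add_zero]
    rw [hpsi, Finset.sum_sub_distrib, Finset.sum_const, nsmul_eq_mul]
    push_cast at hxK ⊢
    linarith
  · -- ≥ : use optimal K₀
    obtain ⟨K₀, _, hK₀⟩ := Finset.exists_mem_eq_sup'
      (⟨∅, Finset.mem_univ _⟩ : (Finset.univ : Finset (Finset (Fin (S.n j)))).Nonempty)
      (fun K => ((∑ k ∈ K, gg S j θ k) - S.η j) / (K.card + 1))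
    have hcard : (0:ℝ) < K₀.card + 1 := by positivity
    have hxval : x = ((∑ k ∈ K₀, gg S j θ k) - S.η j) / (K₀.card + 1) := by
      rw [hx]; unfold xbar
      exact hK₀
    have hxeq : x * (K₀.card + 1) = (∑ k ∈ K₀, gg S j θ k) - S.η j := by
      rw [hxval]; field_simp
    have h1 : ∑ k ∈ K₀, (gg S j θ k - x) ≤ psi S j θ x := by
      unfold psi
      refine le_trans (Finset.sum_le_sum fun k _ => le_max_left (gg S j θ k - x) 0) ?_
      exact Finset.sum_le_sum_of_subset_of_nonneg (Finset.subset_univ _)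
        (fun k _ _ => le_max_right _ _)
    rw [Finset.sum_sub_distrib, Finset.sum_const, nsmul_eq_mul] at h1
    push_cast at hxeq h1 ⊢
    linarith

noncomputable def lo (θ : ℝ) : ℝ := min (AA S) θ
noncomputable def hi (θ : ℝ) : ℝ := min (BB S) θ

noncomputable def xx (θ : ℝ) : ℝ := max (lo S θ) (min (hi S θ) (xbar S θ))

lemma lo_le_hi (θ : ℝ) : lo S θ ≤ hi S θ := min_le_min (AA_le_BB S) (le_refl _)

lemma lo_nonneg (θ : ℝ) (hθ : 0 ≤ θ) : 0 ≤ lo S θ := le_min (AA_nonneg S) hθ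

lemma hi_le_theta (θ : ℝ) : hi S θ ≤ θ := min_le_right _ _

lemma xx_mem (θ : ℝ) : lo S θ ≤ xx S θ ∧ xx S θ ≤ hi S θ :=
  ⟨le_max_left _ _, max_le (lo_le_hi S θ) (min_le_left _ _)⟩

lemma xx_nonneg (θ : ℝ) (hθ : 0 ≤ θ) : 0 ≤ xx S θ :=
  le_trans (lo_nonneg S θ hθ) (xx_mem S θ).1

lemma xx_le_theta (θ : ℝ) : xx S θ ≤ θ := le_trans (xx_mem S θ).2 (hi_le_theta S θ)


lemma sum_min_ge (j : Fin S.J) (θ z : ℝ) (hθ : 0 ≤ θ) (hz : 0 ≤ z) (hzθ : z ≤ θ) :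
    mmf S j z ≤ psi S j θ 0 := by
  rw [psi_zero S j θ hθ]
  have h1 : mmf S j z ≤ min (S.η j + θ) (Dt S j) :=
    min_le_min (by linarith) (le_refl _)
  refine le_trans h1 ?_
  by_cases h : ∃ k, S.η j + θ ≤ S.Δ j k
  · obtain ⟨k₀, hk₀⟩ := h
    have : gg S j θ k₀ = S.η j + θ := min_eq_left hk₀
    calc min (S.η j + θ) (Dt S j) ≤ S.η j + θ := min_le_left _ _
    _ = gg S j θ k₀ := this.symm
    _ ≤ ∑ k, gg S j θ k := Finset.single_le_sum (fun k _ => gg_nonneg S j θ hθ k)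
        (Finset.mem_univ k₀)
  · push_neg at h
    have : ∑ k, gg S j θ k = Dt S j := by
      unfold Dt
      refine Finset.sum_congr rfl fun k _ => min_eq_right (h k).le
    rw [this]
    exact min_le_right _ _

lemma lam_le_x (θ x : ℝ) (hθ : 0 ≤ θ) (hx : 0 ≤ x) (hxbar : xbar S θ ≤ x) :
    lam S (jst S) θ (S.η (jst S) + x) ≤ x := by
  refine lam_le_of_psi_le S (jst S) θ _ x hx ?_
  have h1 : psi S (jst S) θ x ≤ psi S (jst S) θ (xbar S θ) := psi_antitone S _ θ hxbar
  rw [psi_xbar S θ hθ] at h1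
  linarith

lemma x_le_lam (θ x : ℝ) (hθ : 0 ≤ θ) (hx : 0 ≤ x) (hxbar : x ≤ xbar S θ) :
    x ≤ lam S (jst S) θ (S.η (jst S) + x) := by
  set j := jst S
  by_contra hcon
  push_neg at hcon
  set lv := lam S j θ (S.η j + x) with hlv
  have hxbar0 : 0 ≤ xbar S θ := le_trans hx hxbar
  have hs0 : 0 ≤ S.η j + x := by linarith [eta_nonneg S j]
  have hs1 : S.η j + x ≤ psi S j θ 0 := by
    have h1 : psi S j θ (xbar S θ) ≤ psi S j θ 0 := psi_antitone S j θ hxbar0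
    rw [psi_xbar S θ hθ] at h1
    linarith
  have hpsilam : psi S j θ lv = S.η j + x := lam_eq S j θ _ hθ hs0 hs1
  have hlam0 : 0 ≤ lv := lam_nonneg S j θ _ hθ hs0
  have hpsix : psi S j θ x = S.η j + x := by
    have h1 : psi S j θ x ≤ psi S j θ lv := psi_antitone S j θ hcon.le
    have h2 : psi S j θ (xbar S θ) ≤ psi S j θ x := psi_antitone S j θ hxbar
    rw [psi_xbar S θ hθ] at h2
    rw [hpsilam] at h1
    linarith
  -- flatness: each term equal
  have hterm : ∀ k ∈ Finset.univ, max (gg S j θ k - x) 0 ≤ max (gg S j θ k - lv) 0 :=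
    fun k _ => max_le_max (by linarith) (le_refl _)
  have hsum_eq : ∑ k : Fin (S.n j), max (gg S j θ k - x) 0
      = ∑ k : Fin (S.n j), max (gg S j θ k - lv) 0 := by
    show psi S j θ x = psi S j θ lv
    rw [hpsix, hpsilam]
  have hflat := (Finset.sum_eq_sum_iff_of_le hterm).mp hsum_eq
  have hgle : ∀ k, gg S j θ k ≤ lv := by
    intro k
    by_contra hg
    push_neg at hg
    have hk := (hflat k (Finset.mem_univ k)).symm
    have h1 : max (gg S j θ k - lv) 0 = gg S j θ k - lv := max_eq_left (by linarith)
    have h2 : max (gg S j θ k - x) 0 < gg S j θ k - lv := by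
      rcases max_cases (gg S j θ k - x) (0:ℝ) with ⟨hm, _⟩ | ⟨hm, _⟩ <;> rw [hm] <;> linarith
    rw [h1] at hk
    linarith
  have hpsi0 : psi S j θ lv = 0 := by
    unfold psi
    refine Finset.sum_eq_zero fun k _ => max_eq_right (by linarith [hgle k])
  rw [hpsi0] at hpsilam
  have hx0 : x = 0 := by linarith [eta_nonneg S j]
  rw [hx0] at hcon
  linarith

/-! ### construction of the projection point -/

noncomputable def lamj (θ : ℝ) (j : Fin S.J) : ℝ := lam S j θ (mmf S j (xx S θ))

noncomputable def yy (θ : ℝ) (j : Fin S.J) (k : Fin (S.n j)) : ℝ :=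
  max (gg S j θ k - lamj S θ j) 0

lemma lamj_nonneg (θ : ℝ) (hθ : 0 ≤ θ) (j : Fin S.J) : 0 ≤ lamj S θ j :=
  lam_nonneg S j θ _ hθ (mmf_nonneg S j _ (xx_nonneg S θ hθ))

lemma yy_sum (θ : ℝ) (hθ : 0 ≤ θ) (j : Fin S.J) : ∑ k, yy S θ j k = mmf S j (xx S θ) := by
  have : ∑ k, yy S θ j k = psi S j θ (lamj S θ j) := rfl
  rw [this]
  exact lam_eq S j θ _ hθ (mmf_nonneg S j _ (xx_nonneg S θ hθ))
    (sum_min_ge S j θ _ hθ (xx_nonneg S θ hθ) (xx_le_theta S θ))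

lemma yy_nonneg (θ : ℝ) (j : Fin S.J) (k : Fin (S.n j)) : 0 ≤ yy S θ j k :=
  le_max_right _ _

lemma yy_le_delta (θ : ℝ) (hθ : 0 ≤ θ) (j : Fin S.J) (k : Fin (S.n j)) :
    yy S θ j k ≤ S.Δ j k :=
  max_le (by linarith [gg_le_delta S j θ k, lamj_nonneg S θ hθ j]) (delta_nonneg S j k)

noncomputable def qq (θ : ℝ) : EuclideanSpace ℝ S.Idx :=
  WithLp.toLp 2 fun (i : S.Idx) => Option.elim i (S.v0 + xx S θ) fun jk => S.b jk.1 jk.2 - yy S θ jk.1 jk.2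

lemma qq_none (θ : ℝ) : qq S θ none = S.v0 + xx S θ := rfl

lemma qq_some (θ : ℝ) (j : Fin S.J) (k : Fin (S.n j)) :
    qq S θ (some ⟨j, k⟩) = S.b j k - yy S θ j k := rfl

lemma vick_none (θ : ℝ) : S.vick θ none = S.v0 := rfl

lemma vick_some (θ : ℝ) (j : Fin S.J) (k : Fin (S.n j)) :
    S.b j k - S.vick θ (some ⟨j, k⟩) = gg S j θ k := by
  show S.b j k - max (S.b j k - S.η j - θ) (S.bl j k) = gg S j θ k
  unfold gg StarSetting.Δ
  rcases le_total (S.b j k - S.η j - θ) (S.bl j k) with h | h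
  · rw [max_eq_right h, min_eq_right (by linarith)]
  · rw [max_eq_left h, min_eq_left (by linarith)]
    ring

lemma eta_def' (j : Fin S.J) : S.C j = S.v0 + (∑ k, S.b j k) - S.η j := by
  unfold StarSetting.η; ring

lemma qq_coreK (θ : ℝ) (hθ : 0 ≤ θ) : qq S θ ∈ S.coreK θ := by
  refine ⟨fun j => ?_, fun j k => ?_, ?_, ?_⟩
  · have hsum : ∑ k, qq S θ (some ⟨j, k⟩) = (∑ k, S.b j k) - mmf S j (xx S θ) := by
      rw [← yy_sum S θ hθ j, ← Finset.sum_sub_distrib]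
      rfl
    rw [qq_none, hsum, eta_def' S j]
    have : mmf S j (xx S θ) ≤ S.η j + xx S θ := min_le_left _ _
    linarith
  · rw [qq_some]
    constructor
    · have := yy_le_delta S θ hθ j k
      unfold StarSetting.Δ at this
      linarith
    · linarith [yy_nonneg S θ j k]
  · rw [qq_none]; linarith [xx_nonneg S θ hθ]
  · rw [qq_none]; linarith [xx_le_theta S θ]

lemma revenue_eq (r : EuclideanSpace ℝ S.Idx) :
    S.revenue r = S.v0 + (∑ j, ∑ k, S.b j k)
      + ((r none - S.v0) - ∑ j, ∑ k, (S.b j k - r (some ⟨j, k⟩))) := by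
  unfold StarSetting.revenue
  have h1 : ∀ j : Fin S.J, ∑ k, (S.b j k - r (some ⟨j, k⟩))
      = (∑ k, S.b j k) - ∑ k, r (some ⟨j,k⟩) := fun j => Finset.sum_sub_distrib _ _
  rw [Finset.sum_congr rfl fun j (_ : j ∈ Finset.univ) => h1 j, Finset.sum_sub_distrib]
  ring

lemma revenue_qq (θ : ℝ) (hθ : 0 ≤ θ) :
    S.revenue (qq S θ) = S.v0 + (∑ j, ∑ k, S.b j k) + hh S (xx S θ) := by
  rw [revenue_eq]
  have h1 : qq S θ none - S.v0 = xx S θ := by rw [qq_none]; ring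
  have h2 : ∀ j : Fin S.J, ∑ k, (S.b j k - qq S θ (some ⟨j, k⟩)) = mmf S j (xx S θ) := by
    intro j
    rw [← yy_sum S θ hθ j]
    exact Finset.sum_congr rfl fun k _ => by rw [qq_some]; ring
  rw [h1, Finset.sum_congr rfl fun j _ => h2 j]
  rfl


/-! ### optimality of xx for hh -/

lemma xx_eq_theta_of_small (θ : ℝ) (hθA : θ ≤ AA S) : xx S θ = θ := by
  have hlo : lo S θ = θ := min_eq_right hθA
  have hhi : hi S θ = θ := min_eq_right (le_trans hθA (AA_le_BB S))
  unfold xx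
  rw [hlo, hhi]
  exact max_eq_left (min_le_left _ _)

lemma hh_xx_eq_lo (θ : ℝ) (hθ : 0 ≤ θ) : hh S (xx S θ) = hh S (lo S θ) := by
  rcases le_or_gt θ (AA S) with hA | hA
  · rw [xx_eq_theta_of_small S θ hA, lo, min_eq_right hA]
  · have hlo : lo S θ = AA S := min_eq_left hA.le
    refine hh_flat S (lo S θ) (xx S θ) (le_of_eq hlo.symm) (xx_mem S θ).1
      (le_trans (xx_mem S θ).2 (min_le_left _ _))

lemma hh_hi_eq_xx (θ : ℝ) (hθ : 0 ≤ θ) : hh S (hi S θ) = hh S (xx S θ) := by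
  rcases le_or_gt θ (AA S) with hA | hA
  · rw [xx_eq_theta_of_small S θ hA, hi, min_eq_right (le_trans hA (AA_le_BB S))]
  · have hlo : lo S θ = AA S := min_eq_left hA.le
    refine hh_flat S (xx S θ) (hi S θ) (hlo ▸ (xx_mem S θ).1) (xx_mem S θ).2
      (min_le_left _ _)

lemma hh_min (θ z : ℝ) (hθ : 0 ≤ θ) (hz : 0 ≤ z) (hzθ : z ≤ θ) :
    hh S (xx S θ) ≤ hh S z := by
  rcases lt_or_ge z (lo S θ) with h1 | h1
  · rw [hh_xx_eq_lo S θ hθ]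
    exact (hh_dec S z (lo S θ) hz h1 (min_le_left _ _)).le
  rcases le_or_gt z (hi S θ) with h2 | h2
  · -- z in [lo, hi]
    rcases le_or_gt θ (AA S) with hA | hA
    · have hlo : lo S θ = θ := min_eq_right hA
      have hz' : z = θ := le_antisymm hzθ (hlo ▸ h1)
      rw [xx_eq_theta_of_small S θ hA, hz']
    · have hlo : lo S θ = AA S := min_eq_left hA.le
      rw [hh_xx_eq_lo S θ hθ]
      exact le_of_eq (hh_flat S (lo S θ) z (le_of_eq hlo.symm) h1
        (le_trans h2 (min_le_left _ _))).symm
  · -- z > hi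
    have hhiB : hi S θ = BB S := by
      rcases le_total (BB S) θ with hbθ | hbθ
      · exact min_eq_left hbθ
      · exfalso
        have hh' : hi S θ = θ := min_eq_right hbθ
        rw [hh'] at h2
        linarith
    rw [← hh_hi_eq_xx S θ hθ]
    exact (hh_inc S (hi S θ) z hhiB.ge h2).le

lemma hh_uniq (θ z : ℝ) (hθ : 0 ≤ θ) (hz : 0 ≤ z) (hzθ : z ≤ θ)
    (heq : hh S z = hh S (xx S θ)) : lo S θ ≤ z ∧ z ≤ hi S θ := by
  constructor
  · by_contra h1
    push_neg at h1
    have := hh_dec S z (lo S θ) hz h1 (min_le_left _ _)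
    rw [← hh_xx_eq_lo S θ hθ, heq] at this
    exact lt_irrefl _ this
  · by_contra h2
    push_neg at h2
    have hhiB : hi S θ = BB S := by
      rcases le_total (BB S) θ with hbθ | hbθ
      · exact min_eq_left hbθ
      · exfalso
        have hh' : hi S θ = θ := min_eq_right hbθ
        rw [hh'] at h2
        linarith
    have := hh_inc S (hi S θ) z hhiB.ge h2
    rw [hh_hi_eq_xx S θ hθ, heq] at this
    exact lt_irrefl _ this

/-! ### qq is in the MRC, and MRC members are characterized -/

lemma coreK_facts (θ : ℝ) (r : EuclideanSpace ℝ S.Idx) (hr : r ∈ S.coreK θ) :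
    (0 ≤ r none - S.v0 ∧ r none - S.v0 ≤ θ) ∧
    (∀ j, ∑ k, (S.b j k - r (some ⟨j, k⟩)) ≤ mmf S j (r none - S.v0)) := by
  obtain ⟨hC, hbox, hlow, hhigh⟩ := hr
  refine ⟨⟨by linarith, by linarith⟩, fun j => ?_⟩
  refine le_min ?_ ?_
  · have h1 := hC j
    have h2 : ∑ k, (S.b j k - r (some ⟨j, k⟩)) = (∑ k, S.b j k) - ∑ k, r (some ⟨j,k⟩) :=
      Finset.sum_sub_distrib _ _
    rw [h2, eta_def' S j] at *
    linarith [hC j]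
  · unfold Dt
    refine Finset.sum_le_sum fun k _ => ?_
    unfold StarSetting.Δ
    linarith [(hbox j k).1]

lemma revenue_ge (θ : ℝ) (hθ : 0 ≤ θ) (r : EuclideanSpace ℝ S.Idx) (hr : r ∈ S.coreK θ) :
    S.v0 + (∑ j, ∑ k, S.b j k) + hh S (r none - S.v0) ≤ S.revenue r := by
  obtain ⟨⟨hx0, hxθ⟩, hsum⟩ := coreK_facts S θ r hr
  rw [revenue_eq S r]
  have h1 : ∑ j, ∑ k, (S.b j k - r (some ⟨j, k⟩)) ≤ ∑ j, mmf S j (r none - S.v0) :=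
    Finset.sum_le_sum fun j _ => hsum j
  unfold hh
  linarith

lemma qq_MRC (θ : ℝ) (hθ : 0 ≤ θ) : qq S θ ∈ S.MRC θ := by
  refine ⟨qq_coreK S θ hθ, fun r hr => ?_⟩
  rw [revenue_qq S θ hθ]
  refine le_trans ?_ (revenue_ge S θ hθ r hr)
  obtain ⟨⟨hx0, hxθ⟩, _⟩ := coreK_facts S θ r hr
  have := hh_min S θ (r none - S.v0) hθ hx0 hxθ
  linarith

lemma MRC_facts (θ : ℝ) (hθ : 0 ≤ θ) (r : EuclideanSpace ℝ S.Idx) (hr : r ∈ S.MRC θ) :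
    (lo S θ ≤ r none - S.v0 ∧ r none - S.v0 ≤ hi S θ) ∧
    (∀ j, ∑ k, (S.b j k - r (some ⟨j, k⟩)) = mmf S j (r none - S.v0)) := by
  obtain ⟨hrK, hropt⟩ := hr
  obtain ⟨⟨hx0, hxθ⟩, hsum⟩ := coreK_facts S θ r hrK
  have hrev_le : S.revenue r ≤ S.revenue (qq S θ) := hropt _ (qq_coreK S θ hθ)
  have hrev_ge := revenue_ge S θ hθ r hrK
  have hmin := hh_min S θ (r none - S.v0) hθ hx0 hxθ
  rw [revenue_qq S θ hθ] at hrev_le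
  -- chain of inequalities is tight
  have htight : S.revenue r = S.v0 + (∑ j, ∑ k, S.b j k) + hh S (r none - S.v0) := by
    linarith
  have hheq : hh S (r none - S.v0) = hh S (xx S θ) := by linarith
  refine ⟨hh_uniq S θ _ hθ hx0 hxθ hheq, ?_⟩
  -- per-arm equality of sums
  have hsum_tot : ∑ j, mmf S j (r none - S.v0) = ∑ j, ∑ k, (S.b j k - r (some ⟨j, k⟩)) := by
    rw [revenue_eq S r] at htight
    unfold hh at htight
    linarith
  have hterm : ∀ j ∈ Finset.univ, ∑ k, (S.b j k - r (some ⟨j, k⟩)) ≤ mmf S j (r none - S.v0) :=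
    fun j _ => hsum j
  intro j
  exact (Finset.sum_eq_sum_iff_of_le hterm).mp hsum_tot.symm j (Finset.mem_univ j)


/-! ### the variational inequality -/

lemma arm_bound (θ : ℝ) (hθ : 0 ≤ θ) (xr : ℝ) (hxr_lo : lo S θ ≤ xr) (hxr_hi : xr ≤ hi S θ) :
    ∑ j, lamj S θ j * (mmf S j xr - mmf S j (xx S θ)) ≤ xx S θ * (xr - xx S θ) := by
  rcases eq_or_ne xr (xx S θ) with he | hne
  · rw [he]
    simp
  · have hxx := xx_mem S θ
    have hlohi : lo S θ < hi S θ := by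
      rcases lt_or_eq_of_le (lo_le_hi S θ) with h | h
      · exact h
      · exfalso
        apply hne
        have h1 : xr ≤ lo S θ := by rw [h]; exact hxr_hi
        have h2 : xx S θ ≤ lo S θ := by rw [h]; exact hxx.2
        have h3 : xr = lo S θ := le_antisymm h1 hxr_lo
        have h4 : xx S θ = lo S θ := le_antisymm h2 hxx.1
        rw [h3, h4]
    have hloA : lo S θ = AA S := by
      rcases le_or_gt (AA S) θ with h | h
      · exact min_eq_left h
      · exfalso
        have h1 : lo S θ = θ := min_eq_right h.le
        have h2 : hi S θ ≤ θ := min_le_right _ _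
        rw [h1] at hlohi
        linarith
    have hBpos : 0 < BB S := by
      have h0 : 0 ≤ lo S θ := lo_nonneg S θ hθ
      have : 0 < hi S θ := lt_of_le_of_lt h0 hlohi
      exact lt_of_lt_of_le this (min_le_left _ _)
    have hBc : BB S = cc S (jst S) := by
      have h1 : BB S = cmax S := by
        unfold BB
        rcases max_cases 0 (cmax S) with ⟨hm, _⟩ | ⟨hm, _⟩
        · exfalso
          unfold BB at hBpos
          rw [hm] at hBpos
          exact lt_irrefl _ hBpos
        · exact hm
      rw [h1, cc_jst]
    -- other arms contribute zero
    have harm : ∀ j, j ≠ jst S → mmf S j xr = mmf S j (xx S θ) := by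
      intro j hj
      have hcj : cc S j ≤ AA S := cc_le_AA S j hj
      rw [mmf_eq_const S j xr (by rw [← hloA] at hcj; linarith),
        mmf_eq_const S j _ (by rw [← hloA] at hcj; linarith [hxx.1])]
    have hsum : ∑ j, lamj S θ j * (mmf S j xr - mmf S j (xx S θ))
        = lamj S θ (jst S) * (mmf S (jst S) xr - mmf S (jst S) (xx S θ)) := by
      refine Finset.sum_eq_single (jst S) (fun j _ hj => by rw [harm j hj]; ring)
        (fun h => absurd (Finset.mem_univ _) h)
    rw [hsum]
    have hxrc : xr ≤ cc S (jst S) := le_trans hxr_hi (hBc ▸ min_le_left _ _)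
    have hxxc : xx S θ ≤ cc S (jst S) := le_trans hxx.2 (hBc ▸ min_le_left _ _)
    rw [mmf_eq_lin S _ _ hxrc, mmf_eq_lin S _ _ hxxc]
    have hmdiff : S.η (jst S) + xr - (S.η (jst S) + xx S θ) = xr - xx S θ := by ring
    rw [hmdiff]
    have hlamval : lamj S θ (jst S) = lam S (jst S) θ (S.η (jst S) + xx S θ) := by
      unfold lamj
      rw [mmf_eq_lin S _ _ hxxc]
    rcases lt_or_gt_of_ne hne with hlt | hgt
    · -- xr < xx : need lam ≥ xx
      have hxxlo : lo S θ < xx S θ := lt_of_le_of_lt hxr_lo hlt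
      have hxxm : xx S θ = min (hi S θ) (xbar S θ) := by
        unfold xx
        rcases max_cases (lo S θ) (min (hi S θ) (xbar S θ)) with ⟨hm, _⟩ | ⟨hm, _⟩
        · exfalso
          unfold xx at hxxlo
          rw [hm] at hxxlo
          exact lt_irrefl _ hxxlo
        · exact hm
      have hxbar : xx S θ ≤ xbar S θ := hxxm.le.trans (min_le_right _ _)
      have hlam := x_le_lam S θ (xx S θ) hθ (xx_nonneg S θ hθ) hxbar
      rw [← hlamval] at hlam
      nlinarith
    · -- xr > xx : need lam ≤ xx
      have hxxhi : xx S θ < hi S θ := lt_of_lt_of_le hgt hxr_hi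
      have hxbar : xbar S θ ≤ xx S θ := by
        by_contra hc
        push_neg at hc
        have h1 : xx S θ < min (hi S θ) (xbar S θ) := lt_min hxxhi hc
        have h2 : min (hi S θ) (xbar S θ) ≤ xx S θ := le_max_right _ _
        linarith
      have hlam := lam_le_x S θ (xx S θ) hθ (xx_nonneg S θ hθ) hxbar
      rw [← hlamval] at hlam
      nlinarith

lemma coord_bound (l g w : ℝ) (hl : 0 ≤ l) (hg : 0 ≤ g) (hw : 0 ≤ w) :
    (g - max (g - l) 0) * (w - max (g - l) 0) ≤ l * (w - max (g - l) 0) := by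
  rcases le_total l g with h | h
  · rw [max_eq_left (by linarith)]
    nlinarith
  · rw [max_eq_right (by linarith)]
    nlinarith

lemma inner_expand (u w : EuclideanSpace ℝ S.Idx) :
    (inner ℝ u w : ℝ) = u none * w none + ∑ j, ∑ k, u (some ⟨j,k⟩) * w (some ⟨j,k⟩) := by
  rw [PiLp.inner_apply]
  have h1 : ∀ i : S.Idx, (inner ℝ (u i) (w i) : ℝ) = u i * w i := fun i => by
    simp [RCLike.inner_apply, starRingEnd_apply, mul_comm]
  rw [Finset.sum_congr rfl fun i _ => h1 i, Fintype.sum_option]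
  congr 1
  rw [Finset.sum_sigma']
  rfl

lemma VI (θ : ℝ) (hθ : 0 ≤ θ) (r : EuclideanSpace ℝ S.Idx) (hr : r ∈ S.MRC θ) :
    (inner ℝ (S.vick θ - qq S θ) (r - qq S θ) : ℝ) ≤ 0 := by
  obtain ⟨⟨hxr_lo, hxr_hi⟩, hsumw⟩ := MRC_facts S θ hθ r hr
  obtain ⟨hrC, hrbox, hrlow, hrhigh⟩ := hr.1
  rw [inner_expand]
  have hnone : (S.vick θ - qq S θ) none * (r - qq S θ) none
      = -(xx S θ * ((r none - S.v0) - xx S θ)) := by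
    have e1 : (S.vick θ - qq S θ) none = S.v0 - (S.v0 + xx S θ) := rfl
    have e2 : (r - qq S θ) none = r none - (S.v0 + xx S θ) := rfl
    rw [e1, e2]
    ring
  have hsome : ∀ (j : Fin S.J) (k : Fin (S.n j)),
      (S.vick θ - qq S θ) (some ⟨j,k⟩) * (r - qq S θ) (some ⟨j,k⟩)
      = (gg S j θ k - yy S θ j k) * ((S.b j k - r (some ⟨j,k⟩)) - yy S θ j k) := by
    intro j k
    have e1 : (S.vick θ - qq S θ) (some ⟨j,k⟩) = S.vick θ (some ⟨j,k⟩) - qq S θ (some ⟨j,k⟩) := rfl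
    have e2 : (r - qq S θ) (some ⟨j,k⟩) = r (some ⟨j,k⟩) - qq S θ (some ⟨j,k⟩) := rfl
    rw [e1, e2, qq_some]
    have e3 : S.vick θ (some ⟨j,k⟩) = S.b j k - gg S j θ k := by
      have := vick_some S θ j k
      linarith
    rw [e3]
    ring
  rw [hnone, Finset.sum_congr rfl fun j _ => Finset.sum_congr rfl fun k _ => hsome j k]
  have harm : ∀ j : Fin S.J,
      ∑ k, (gg S j θ k - yy S θ j k) * ((S.b j k - r (some ⟨j,k⟩)) - yy S θ j k)
      ≤ lamj S θ j * (mmf S j (r none - S.v0) - mmf S j (xx S θ)) := by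
    intro j
    have hco : ∀ k : Fin (S.n j),
        (gg S j θ k - yy S θ j k) * ((S.b j k - r (some ⟨j,k⟩)) - yy S θ j k)
        ≤ lamj S θ j * ((S.b j k - r (some ⟨j,k⟩)) - yy S θ j k) := by
      intro k
      exact coord_bound (lamj S θ j) (gg S j θ k) (S.b j k - r (some ⟨j,k⟩))
        (lamj_nonneg S θ hθ j) (gg_nonneg S j θ hθ k) (by linarith [(hrbox j k).2])
    refine le_trans (Finset.sum_le_sum fun k _ => hco k) ?_
    rw [← Finset.mul_sum, Finset.sum_sub_distrib, hsumw j, yy_sum S θ hθ j]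
  have htot := Finset.sum_le_sum fun j (_ : j ∈ Finset.univ) => harm j
  have hbd := arm_bound S θ hθ (r none - S.v0) hxr_lo hxr_hi
  linarith

/-! ### identification of the projection -/

lemma proj_eq (θ : ℝ) (hθ : 0 ≤ θ) (pt : EuclideanSpace ℝ S.Idx)
    (hpt : IsProjOn (S.MRC θ) (S.vick θ) pt) : pt = qq S θ := by
  have hVI := VI S θ hθ pt hpt.1
  have hd : dist (S.vick θ) pt ≤ dist (S.vick θ) (qq S θ) := hpt.2 _ (qq_MRC S θ hθ)
  rw [dist_eq_norm, dist_eq_norm] at hd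
  set a := S.vick θ - qq S θ with ha
  set c := pt - qq S θ with hc
  have hsub : a - c = S.vick θ - pt := by rw [ha, hc]; abel
  have hid : ‖S.vick θ - pt‖ ^ 2 = ‖a‖ ^ 2 - 2 * (inner ℝ a c : ℝ) + ‖c‖ ^ 2 := by
    rw [← hsub]
    exact norm_sub_sq_real a c
  have hsq : ‖S.vick θ - pt‖ ^ 2 ≤ ‖a‖ ^ 2 := by
    have h1 := norm_nonneg (S.vick θ - pt)
    nlinarith
  have hc0 : ‖c‖ = 0 := by nlinarith [norm_nonneg c]
  have := norm_eq_zero.mp hc0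
  rw [hc] at this
  exact sub_eq_zero.mp this


/-! ### piecewise linearity and Lipschitz bound of the formula -/

open PLAux in
lemma MM_xbar_term (K : Finset (Fin (S.n (jst S)))) :
    PLAux.MM (fun θ => ((∑ k ∈ K, gg S (jst S) θ k) - S.η (jst S)) / ((K.card : ℝ) + 1)) := by
  set c : ℝ := (K.card : ℝ) + 1 with hc
  have hcpos : (0:ℝ) < c := by positivity
  have hfun : (fun θ => ((∑ k ∈ K, gg S (jst S) θ k) - S.η (jst S)) / c)
      = fun θ => (∑ k ∈ K, min ((1/c) * θ + S.η (jst S) * (1/c)) (0 * θ + S.Δ (jst S) k * (1/c)))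
        + (0 * θ + (- S.η (jst S)) * (1/c)) := by
    funext θ
    have hterm : ∀ k ∈ K, min ((1/c) * θ + S.η (jst S) * (1/c)) (0 * θ + S.Δ (jst S) k * (1/c))
        = (gg S (jst S) θ k) * (1/c) := by
      intro k _
      have e1 : (1/c) * θ + S.η (jst S) * (1/c) = (S.η (jst S) + θ) * (1/c) := by ring
      have e2 : 0 * θ + S.Δ (jst S) k * (1/c) = S.Δ (jst S) k * (1/c) := by ring
      rw [e1, e2]
      unfold gg
      have hcInv : (0:ℝ) ≤ 1/c := by positivity
      rcases le_total (S.η (jst S) + θ) (S.Δ (jst S) k) with h | h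
      · rw [min_eq_left (mul_le_mul_of_nonneg_right h hcInv), min_eq_left h]
      · rw [min_eq_right (mul_le_mul_of_nonneg_right h hcInv), min_eq_right h]
    rw [Finset.sum_congr rfl hterm, ← Finset.sum_mul]
    field_simp
    ring
  rw [hfun]
  refine PLAux.MM.add (PLAux.MM.sum fun k _ => PLAux.MM.min ?_ ?_) ?_
  · exact PLAux.MM.affine (1/c) (S.η (jst S) * (1/c))
  · exact PLAux.MM.affine 0 (S.Δ (jst S) k * (1/c))
  · exact PLAux.MM.affine 0 ((- S.η (jst S)) * (1/c))

lemma MM_xbar : PLAux.MM (fun θ => xbar S θ) := by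
  unfold xbar
  exact PLAux.MM.sup' _ fun K _ => MM_xbar_term S K

open PLAux in
lemma MM_price : PLAux.MM (fun θ => S.v0 + xx S θ) := by
  have hfun : (fun θ => S.v0 + xx S θ)
      = fun θ => (0 * θ + S.v0) +
          max (min (0 * θ + AA S) (1 * θ + 0))
            (min (min (0 * θ + BB S) (1 * θ + 0)) (xbar S θ)) := by
    funext θ
    unfold xx lo hi
    norm_num
  rw [hfun]
  exact PLAux.MM.add (PLAux.MM.affine 0 S.v0)
    (PLAux.MM.max (PLAux.MM.min (PLAux.MM.affine 0 (AA S)) (PLAux.MM.affine 1 0))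
      (PLAux.MM.min (PLAux.MM.min (PLAux.MM.affine 0 (BB S)) (PLAux.MM.affine 1 0))
        (MM_xbar S)))

lemma xbar_lip (θ θ' : ℝ) (h : θ ≤ θ') : xbar S θ' ≤ xbar S θ + (θ' - θ) := by
  unfold xbar
  refine Finset.sup'_le _ _ fun K _ => ?_
  have hδ : 0 ≤ θ' - θ := by linarith
  set c : ℝ := (K.card : ℝ) + 1 with hc
  have hcpos : (0:ℝ) < c := by positivity
  have hKc : (K.card : ℝ) ≤ c := by rw [hc]; linarith
  have hnum : ∑ k ∈ K, gg S (jst S) θ' k ≤ (∑ k ∈ K, gg S (jst S) θ k) + c * (θ' - θ) := by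
    have h1 : ∑ k ∈ K, gg S (jst S) θ' k ≤ ∑ k ∈ K, (gg S (jst S) θ k + (θ' - θ)) :=
      Finset.sum_le_sum fun k _ => gg_lip S (jst S) k h
    rw [Finset.sum_add_distrib, Finset.sum_const, nsmul_eq_mul] at h1
    have h2 : (K.card : ℝ) * (θ' - θ) ≤ c * (θ' - θ) := mul_le_mul_of_nonneg_right hKc hδ
    linarith
  have hK : ((∑ k ∈ K, gg S (jst S) θ' k) - S.η (jst S)) / c
      ≤ ((∑ k ∈ K, gg S (jst S) θ k) - S.η (jst S)) / c + (θ' - θ) := by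
    rw [div_add' _ _ _ (ne_of_gt hcpos), div_le_div_iff₀ hcpos hcpos]
    nlinarith
  refine le_trans hK ?_
  have := Finset.le_sup'
    (fun K : Finset (Fin (S.n (jst S))) =>
      ((∑ k ∈ K, gg S (jst S) θ k) - S.η (jst S)) / (K.card + 1))
    (Finset.mem_univ K)
  push_cast at this ⊢
  linarith

lemma xx_lip (θ θ' : ℝ) (h : θ ≤ θ') : xx S θ' ≤ xx S θ + (θ' - θ) := by
  have hδ : 0 ≤ θ' - θ := by linarith
  have hlo : lo S θ' ≤ lo S θ + (θ' - θ) := by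
    unfold lo
    refine le_trans (min_le_min (le_refl _) (le_of_eq rfl)) ?_
    have : min (AA S) θ' ≤ min (AA S + (θ' - θ)) (θ + (θ' - θ)) :=
      min_le_min (by linarith) (by linarith)
    rw [min_add_add_right] at this
    exact this
  have hhi : hi S θ' ≤ hi S θ + (θ' - θ) := by
    unfold hi
    have : min (BB S) θ' ≤ min (BB S + (θ' - θ)) (θ + (θ' - θ)) :=
      min_le_min (by linarith) (by linarith)
    rw [min_add_add_right] at this
    exact this
  have hxb := xbar_lip S θ θ' h
  unfold xx
  have hmin : min (hi S θ') (xbar S θ') ≤ min (hi S θ) (xbar S θ) + (θ' - θ) := by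
    have : min (hi S θ') (xbar S θ') ≤ min (hi S θ + (θ' - θ)) (xbar S θ + (θ' - θ)) :=
      min_le_min hhi hxb
    rw [min_add_add_right] at this
    exact this
  have : max (lo S θ') (min (hi S θ') (xbar S θ'))
      ≤ max (lo S θ + (θ' - θ)) (min (hi S θ) (xbar S θ) + (θ' - θ)) :=
    max_le_max hlo hmin
  rw [max_add_add_right] at this
  exact this

lemma PL_congr {f g : ℝ → ℝ} (h : ∀ x, 0 ≤ x → f x = g x)
    (hg : PiecewiseLinearOnIci g) : PiecewiseLinearOnIci f := by
  obtain ⟨m, t, ht0, hmono, hpieces, a, c, htail⟩ := hg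
  have ht_nonneg : ∀ i, 0 ≤ t i := fun i => by
    rw [← ht0]; exact hmono.monotone (Fin.zero_le i)
  refine ⟨m, t, ht0, hmono, fun i => ?_, a, c, fun x hx => ?_⟩
  · obtain ⟨a', c', hac⟩ := hpieces i
    exact ⟨a', c', fun x hx => by
      rw [h x (le_trans (ht_nonneg i.castSucc) hx.1)]
      exact hac x hx⟩
  · rw [h x (le_trans (ht_nonneg (Fin.last m)) hx)]
    exact htail x hx

end Proof12

/-- the MRC-variant price of buyer zero, `θ ↦ p^{MRC}_{0,θ}`, is piecewise
linear on `[0,∞)` and increases at rate at most one. -/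
theorem mrc_price_slope_le_one (S : StarSetting)
    (p : ℝ → EuclideanSpace ℝ S.Idx)
    (hp : ∀ θ : ℝ, 0 ≤ θ → IsProjOn (S.MRC θ) (S.vick θ) (p θ)) :
    PiecewiseLinearOnIci (fun θ => p θ none) ∧
    ∀ θ θ' : ℝ, 0 ≤ θ → θ ≤ θ' → p θ' none - p θ none ≤ θ' - θ := by
  have hval : ∀ θ : ℝ, 0 ≤ θ → p θ none = S.v0 + Proof12.xx S θ := by
    intro θ hθ
    have h := Proof12.proj_eq S θ hθ (p θ) (hp θ hθ)
    rw [h, Proof12.qq_none]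
  constructor
  · exact Proof12.PL_congr (fun x hx => hval x hx)
      (Proof12.MM_price S).piecewiseLinearOnIci
  · intro θ θ' hθ hθθ'
    rw [hval θ hθ, hval θ' (le_trans hθ hθθ')]
    have := Proof12.xx_lip S θ θ' hθθ'
    linarith
end
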